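/- arXiv:1201.6330 — 3 statements merged into one kernel-verified Lean document; each statement's English description precedes it below -/
import Mathlib

section
/- Let G be a 1-tough graph with δ(G) = 2, C a longest cycle, and suppose some component of G \ C contains an edge (i.e., a longest path in G \ C has length ≥ 1). If moreover n ≤ 3δ + 2 = 8 and |C| ≥ 2δ + 2 = 6, then a contradiction follows; hence every 1-tough graph G with δ(G) = 2 and n ≤ 8 has every longest cycle dominating. -/
open SimpleGraph Finset

namespace Paper

variable {V : Type*}

/-- Number of connected components of `G` after deleting the vertex set `S`. -/
noncomputable def compCount (G : SimpleGraph V) (S : Set V) : ℕ :=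
  Nat.card ((G.induce Sᶜ).ConnectedComponent)

/-- `G` is 1-tough: every cutset `S` satisfies `|S| ≥ s(G \ S)`. -/
def OneTough [Fintype V] (G : SimpleGraph V) : Prop :=
  ∀ S : Finset V, 1 < compCount G ↑S → compCount G ↑S ≤ S.card

/-- The toughness of `G` equals 1. -/
def ToughnessEqOne [Fintype V] (G : SimpleGraph V) : Prop :=
  OneTough G ∧ ∃ S : Finset V, 1 < compCount G ↑S ∧ compCount G ↑S = S.card

/-- The vertex connectivity of `G` equals 2. -/
def ConnectivityEqTwo [Fintype V] (G : SimpleGraph V) : Prop :=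
  (∀ S : Finset V, S.card ≤ 1 → (G.induce (↑S : Set V)ᶜ).Connected) ∧
  ∃ S : Finset V, S.card = 2 ∧ ¬ (G.induce (↑S : Set V)ᶜ).Connected

/-- `G` is 3-connected: it stays connected after removing any 2 vertices. -/
def ThreeConnected [Fintype V] (G : SimpleGraph V) : Prop :=
  ∀ S : Finset V, S.card ≤ 2 → (G.induce (↑S : Set V)ᶜ).Connected

/-- `c` is a longest cycle of `G`. -/
def IsLongestCycle {G : SimpleGraph V} {u : V} (c : G.Walk u u) : Prop :=
  c.IsCycle ∧ ∀ (v : V) (d : G.Walk v v), d.IsCycle → d.length ≤ c.length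

/-- The cycle `c` is dominating: `G \ V(c)` is edgeless. -/
def IsDominating {G : SimpleGraph V} {u : V} (c : G.Walk u u) : Prop :=
  ∀ a b : V, G.Adj a b → a ∈ c.support ∨ b ∈ c.support

/-- The walk `p` avoids all vertices of the cycle `c`. -/
def AvoidsCycle {G : SimpleGraph V} {u x y : V} (c : G.Walk u u) (p : G.Walk x y) : Prop :=
  ∀ v ∈ p.support, v ∉ c.support

/-- `p` is a longest path of `G \ V(c)`. -/
def IsLongestPathOutside {G : SimpleGraph V} {u x y : V} (c : G.Walk u u)
    (p : G.Walk x y) : Prop :=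
  p.IsPath ∧ AvoidsCycle c p ∧
  ∀ (a b : V) (q : G.Walk a b), q.IsPath → AvoidsCycle c q → q.length ≤ p.length

/-- `N_C(x)`: the neighbors of `x` lying on the cycle `c`. -/
def NC [Fintype V] [DecidableEq V] (G : SimpleGraph V) [DecidableRel G.Adj]
    {u : V} (c : G.Walk u u) (x : V) : Finset V :=
  (G.neighborFinset x).filter (fun v => v ∈ c.support)

/-- The interior vertices of a segment (the walk minus its endpoints). -/
def interior {G : SimpleGraph V} {a b : V} (I : G.Walk a b) : Set V :=
  {v | v ∈ I.support ∧ v ≠ a ∧ v ≠ b}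

/-- `I` is an elementary segment of the cycle `c` created by the attachment set `A`:
an arc of `c` between consecutive vertices of `A`. -/
def IsSegment {G : SimpleGraph V} {u : V} (c : G.Walk u u)
    (A : Finset V) {a b : V} (I : G.Walk a b) : Prop :=
  I.IsPath ∧ 1 ≤ I.length ∧ a ∈ A ∧ b ∈ A ∧
  (∀ v ∈ I.support, v ∈ c.support) ∧
  (∀ e ∈ I.edges, e ∈ c.edges) ∧
  ∀ v ∈ interior I, v ∉ A

/-- `L` is an intermediate path between the elementary segments `Ia` and `Ib`:
it joins interior vertices of `Ia` and `Ib` and is internally disjoint from `c ∪ P`. -/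
def IsIntermediatePath {G : SimpleGraph V} {u x y : V} (c : G.Walk u u) (P : G.Walk x y)
    {a b a' b' z w : V} (Ia : G.Walk a b) (Ib : G.Walk a' b') (L : G.Walk z w) : Prop :=
  L.IsPath ∧ 1 ≤ L.length ∧ z ∈ interior Ia ∧ w ∈ interior Ib ∧
  ∀ v ∈ L.support, (v ∈ c.support ∨ v ∈ P.support) → v = z ∨ v = w

/-- Membership in the exceptional class `𝔉₁`. -/
def InF1 [Fintype V] (H : SimpleGraph V) [DecidableRel H.Adj] (d : ℕ) : Prop :=
  ∃ (x y₁ y₂ y₃ : V) (A : Fin 3 → Set V),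
    (∀ i j, i ≠ j → A i ∩ A j = {x}) ∧
    (⋃ i, A i) = Set.univ ∧
    y₁ ∈ A 0 ∧ y₂ ∈ A 1 ∧ y₃ ∈ A 2 ∧ y₁ ≠ x ∧ y₂ ≠ x ∧ y₃ ≠ x ∧
    H.Adj y₁ y₂ ∧ H.Adj y₂ y₃ ∧ H.Adj y₁ y₃ ∧
    (∀ a b : V, H.Adj a b → (∃ i, a ∈ A i ∧ b ∈ A i) ∨
      s(a, b) ∈ ({s(y₁, y₂), s(y₂, y₃), s(y₁, y₃)} : Set (Sym2 V))) ∧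
    (∀ i, (H.induce (A i)).Connected) ∧
    Nat.card (A 0) = d + 1 ∧ Nat.card (A 1) = d + 1 ∧
    d + 1 ≤ Nat.card (A 2) ∧ Nat.card (A 2) ≤ d + 2 ∧
    H.minDegree = d ∧ 3 ≤ d

/-- Membership in the exceptional class `𝔉₂`. -/
def InF2 [Fintype V] (H : SimpleGraph V) [DecidableRel H.Adj] : Prop :=
  ∃ (x z y₁ y₂ y₃ : V) (A : Fin 3 → Set V),
    (∀ i j, i ≠ j → A i ∩ A j = {x}) ∧
    ((⋃ i, A i) ∪ {z}) = Set.univ ∧ z ∉ ⋃ i, A i ∧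
    y₁ ∈ A 0 ∧ y₂ ∈ A 1 ∧ y₃ ∈ A 2 ∧ y₁ ≠ x ∧ y₂ ≠ x ∧ y₃ ≠ x ∧
    H.Adj z y₁ ∧ H.Adj z y₂ ∧ H.Adj z y₃ ∧ H.Adj y₁ y₂ ∧
    (∀ a b : V, H.Adj a b → (∃ i, a ∈ A i ∧ b ∈ A i) ∨
      s(a, b) ∈ ({s(z, y₁), s(z, y₂), s(z, y₃), s(y₁, y₂), s(y₁, y₃), s(y₂, y₃),
        s(z, x)} : Set (Sym2 V))) ∧
    (∀ i, Nat.card (A i) = 4) ∧ H.minDegree = 3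

/-- Membership in the exceptional class `𝔉₃`. -/
def InF3 [Fintype V] (H : SimpleGraph V) [DecidableRel H.Adj] : Prop :=
  ∃ (x z y₁ y₂ y₃ : V) (A : Fin 3 → Set V),
    (∀ i j, i ≠ j → A i ∩ A j = {x}) ∧
    ((⋃ i, A i) ∪ {z}) = Set.univ ∧ z ∉ ⋃ i, A i ∧
    y₁ ∈ A 0 ∧ y₂ ∈ A 1 ∧ y₃ ∈ A 2 ∧ y₁ ≠ x ∧ y₂ ≠ x ∧ y₃ ≠ x ∧
    H.Adj z y₁ ∧ H.Adj z y₂ ∧ H.Adj z y₃ ∧ H.Adj z x ∧ H.Adj y₁ y₂ ∧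
    (∀ a b : V, H.Adj a b → (∃ i, a ∈ A i ∧ b ∈ A i) ∨
      s(a, b) ∈ ({s(z, y₁), s(z, y₂), s(z, y₃), s(z, x), s(y₁, y₂), s(y₁, y₃),
        s(y₂, y₃)} : Set (Sym2 V))) ∧
    (∀ i, Nat.card (A i) = 5) ∧ H.minDegree = 4

/-- Membership in the exceptional class `𝔉₄`. -/
def InF4 [Fintype V] (H : SimpleGraph V) [DecidableRel H.Adj] : Prop :=
  ∃ (x y : V) (z : Fin 4 → V) (A : Fin 4 → Set V),
    x ≠ y ∧
    (∀ i j, i ≠ j → A i ∩ A j = {x, y}) ∧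
    (⋃ i, A i) = Set.univ ∧
    (∀ i, z i ∈ A i ∧ z i ≠ x ∧ z i ≠ y) ∧
    H.Adj (z 0) (z 1) ∧ H.Adj (z 1) (z 2) ∧ H.Adj (z 0) (z 2) ∧
    (∀ a b : V, H.Adj a b → (∃ i, a ∈ A i ∧ b ∈ A i) ∨
      s(a, b) ∈ ({s(z 0, z 1), s(z 1, z 2), s(z 0, z 2)} : Set (Sym2 V))) ∧
    (∀ i, Nat.card (A i) = 5) ∧ H.minDegree = 4



section AuxProofs
variable {G : SimpleGraph V}

lemma mem_of_reachable_closed {W : Type*} {H : SimpleGraph W} {K : Set W}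
    (hK : ∀ a b, H.Adj a b → a ∈ K → b ∈ K) {a b : W} (h : H.Reachable a b) (ha : a ∈ K) :
    b ∈ K := by
  obtain ⟨w⟩ := h
  induction w with
  | nil => exact ha
  | cons h p ih => exact ih (hK _ _ h ha)

lemma not_reachable_of_closed {G : SimpleGraph V} {S : Set V} (K : Set V)
    (hK : ∀ a b : V, a ∉ S → b ∉ S → G.Adj a b → a ∈ K → b ∈ K)
    {a b : ↥Sᶜ} (ha : ↑a ∈ K) (hb : ↑b ∉ K) : ¬ (G.induce Sᶜ).Reachable a b := by
  intro h
  have hcl : ∀ p q : ↥Sᶜ, (G.induce Sᶜ).Adj p q → p ∈ {v : ↥Sᶜ | ↑v ∈ K} → q ∈ {v : ↥Sᶜ | ↑v ∈ K} :=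
    fun p q hadj hp => hK ↑p ↑q p.2 q.2 (by simpa using hadj) hp
  exact hb (mem_of_reachable_closed hcl h ha)

lemma two_le_compCount [Fintype V] (G : SimpleGraph V) (S : Finset V) (K : Set V)
    (hK : ∀ a b : V, a ∉ S → b ∉ S → G.Adj a b → a ∈ K → b ∈ K)
    (a b : V) (ha : a ∉ S) (hb : b ∉ S) (haK : a ∈ K) (hbK : b ∉ K) :
    2 ≤ compCount G ↑S := by
  classical
  have ha' : a ∈ (↑S : Set V)ᶜ := by simpa using ha
  have hb' : b ∈ (↑S : Set V)ᶜ := by simpa using hb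
  have hne : (G.induce (↑S : Set V)ᶜ).connectedComponentMk ⟨a, ha'⟩ ≠
      (G.induce (↑S : Set V)ᶜ).connectedComponentMk ⟨b, hb'⟩ := by
    intro h
    exact not_reachable_of_closed K (by simpa using hK) haK hbK
      ((SimpleGraph.ConnectedComponent.eq).1 h)
  have : Nontrivial ((G.induce (↑S : Set V)ᶜ).ConnectedComponent) := ⟨_, _, hne⟩
  exact Finite.one_lt_card_iff_nontrivial.2 this

lemma three_le_compCount [Fintype V] (G : SimpleGraph V) (S : Finset V) (K1 K2 : Set V)
    (hK1 : ∀ a b : V, a ∉ S → b ∉ S → G.Adj a b → a ∈ K1 → b ∈ K1)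
    (hK2 : ∀ a b : V, a ∉ S → b ∉ S → G.Adj a b → a ∈ K2 → b ∈ K2)
    (a b c : V) (ha : a ∉ S) (hb : b ∉ S) (hc : c ∉ S)
    (haK1 : a ∈ K1) (hbK1 : b ∉ K1) (hbK2 : b ∈ K2) (hcK1 : c ∉ K1) (hcK2 : c ∉ K2) :
    3 ≤ compCount G ↑S := by
  classical
  have ha' : a ∈ (↑S : Set V)ᶜ := by simpa using ha
  have hb' : b ∈ (↑S : Set V)ᶜ := by simpa using hb
  have hc' : c ∈ (↑S : Set V)ᶜ := by simpa using hc
  set GI := G.induce (↑S : Set V)ᶜ with hGI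
  have hab : GI.connectedComponentMk ⟨a, ha'⟩ ≠ GI.connectedComponentMk ⟨b, hb'⟩ := fun h =>
    not_reachable_of_closed K1 (by simpa using hK1) haK1 hbK1 ((SimpleGraph.ConnectedComponent.eq).1 h)
  have hac : GI.connectedComponentMk ⟨a, ha'⟩ ≠ GI.connectedComponentMk ⟨c, hc'⟩ := fun h =>
    not_reachable_of_closed K1 (by simpa using hK1) haK1 hcK1 ((SimpleGraph.ConnectedComponent.eq).1 h)
  have hbc : GI.connectedComponentMk ⟨b, hb'⟩ ≠ GI.connectedComponentMk ⟨c, hc'⟩ := fun h =>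
    not_reachable_of_closed K2 (by simpa using hK2) hbK2 hcK2 ((SimpleGraph.ConnectedComponent.eq).1 h)
  have hba : GI.connectedComponentMk ⟨b, hb'⟩ ≠ GI.connectedComponentMk ⟨a, ha'⟩ := fun h => hab h.symm
  have hca : GI.connectedComponentMk ⟨c, hc'⟩ ≠ GI.connectedComponentMk ⟨a, ha'⟩ := fun h => hac h.symm
  have hcb : GI.connectedComponentMk ⟨c, hc'⟩ ≠ GI.connectedComponentMk ⟨b, hb'⟩ := fun h => hbc h.symm
  have hinj : Function.Injective
      ![GI.connectedComponentMk ⟨a, ha'⟩, GI.connectedComponentMk ⟨b, hb'⟩,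
        GI.connectedComponentMk ⟨c, hc'⟩] := by
    intro i j hij
    fin_cases i <;> fin_cases j <;> simp_all
  simpa [compCount] using Nat.card_le_card_of_injective _ hinj

lemma end_mem_tail_support' {a b : V} {p : G.Walk a b} (hp : ¬ p.Nil) : b ∈ p.support.tail := by
  cases p with
  | nil => simp at hp
  | cons h q => simpa using q.end_mem_support

lemma cycle_takeUntil_isPath [DecidableEq V] {u v : V} {c : G.Walk u u} (hc : c.IsCycle)
    (hv : v ∈ c.support) (hne : v ≠ u) :
    (c.takeUntil v hv).IsPath ∧ (c.dropUntil v hv).IsPath ∧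
    (c.takeUntil v hv).length + (c.dropUntil v hv).length = c.length := by
  have hspec := c.take_spec hv
  have htail : (c.takeUntil v hv).support.tail ++ (c.dropUntil v hv).support.tail
      = c.support.tail := by
    rw [← Walk.tail_support_append, hspec]
  have hnd : ((c.takeUntil v hv).support.tail ++ (c.dropUntil v hv).support.tail).Nodup := by
    rw [htail]; exact hc.2
  rw [List.nodup_append] at hnd
  obtain ⟨hnd1, hnd2, hdisj⟩ := hnd
  have hqnil : ¬ (c.takeUntil v hv).Nil := Walk.not_nil_of_ne (fun h => hne h.symm)
  have hrnil : ¬ (c.dropUntil v hv).Nil := Walk.not_nil_of_ne hne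
  have hvq : v ∈ (c.takeUntil v hv).support.tail := end_mem_tail_support' hqnil
  have hur : u ∈ (c.dropUntil v hv).support.tail := end_mem_tail_support' hrnil
  constructor
  · rw [Walk.isPath_def, Walk.support_eq_cons, List.nodup_cons]
    exact ⟨fun h => hdisj _ h _ hur rfl, hnd1⟩
  constructor
  · rw [Walk.isPath_def, Walk.support_eq_cons, List.nodup_cons]
    exact ⟨fun h => hdisj _ hvq _ h rfl, hnd2⟩
  · have := congrArg Walk.length hspec
    rwa [Walk.length_append] at this

lemma mem_rotate_support [DecidableEq V] {u v z : V} {c : G.Walk u u} (h : v ∈ c.support)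
    (hn : ¬ c.Nil) (hz : z ∈ c.support) : z ∈ (c.rotate _ h).support := by
  have h1 : z ∈ c.support.tail := by
    have hz' : z ∈ u :: c.support.tail := by rwa [← Walk.support_eq_cons]
    rcases List.mem_cons.1 hz' with h' | h'
    · subst h'; exact end_mem_tail_support' hn
    · exact h'
  have h2 := (Walk.support_rotate c _ h).mem_iff.2 h1
  exact List.mem_of_mem_tail h2

lemma rotate_support_subset [DecidableEq V] {u v z : V} {c : G.Walk u u} (h : v ∈ c.support)
    (hz : z ∈ (c.rotate _ h).support) : z ∈ c.support := by
  rw [Walk.support_eq_cons] at hz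
  have hz' : z ∈ (c.rotate _ h).support.tail ∨ z = v := by
    have := List.mem_cons.1 hz
    tauto
  rcases hz' with h' | h'
  · exact List.mem_of_mem_tail ((Walk.support_rotate c _ h).mem_iff.1 h')
  · subst h'; exact h

lemma length_eq_one_of_mem_edges {u v : V} {p : G.Walk u v} (hp : p.IsPath)
    (he : s(u, v) ∈ p.edges) : p.length = 1 := by
  cases p with
  | nil => simp at he
  | @cons _ w _ h p' =>
    rw [Walk.cons_isPath_iff] at hp
    rw [Walk.edges_cons, List.mem_cons] at he
    rcases he with h' | h'
    · rcases Sym2.eq_iff.1 h'.symm with ⟨-, rfl⟩ | ⟨h1, h2⟩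
      · rw [Walk.isPath_iff_eq_nil.1 hp.1]; simp
      · subst h2
        exact absurd h G.irrefl
    · exact absurd (p'.fst_mem_support_of_mem_edges h') hp.2

lemma isPath_concat' {a b d : V} {p : G.Walk a b} (hp : p.IsPath) (h : G.Adj b d)
    (hd : d ∉ p.support) : (p.append (Walk.cons h Walk.nil)).IsPath := by
  rw [Walk.isPath_def]
  have hs : (p.append (Walk.cons h Walk.nil)).support = p.support ++ [d] := by
    rw [Walk.support_append]; simp
  have hdisj2 : p.support.Disjoint [d] := by
    intro x hx hxd
    simp only [List.mem_singleton] at hxd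
    subst hxd; exact hd hx
  rw [hs, List.nodup_append]
  exact ⟨hp.2, by simp, fun a ha b hb hab => by subst hab; exact hdisj2 ha hb⟩

lemma isCycle_append {u v : V} {p : G.Walk u v} {q : G.Walk v u} (hp : p.IsPath) (hq : q.IsPath)
    (hpl : 2 ≤ p.length) (hql : 1 ≤ q.length)
    (hdisj : ∀ w, w ∈ p.support → w ∈ q.support → w = u ∨ w = v) : (p.append q).IsCycle := by
  have hunp : u ∉ p.support.tail := by
    have := hp.2
    rw [Walk.support_eq_cons, List.nodup_cons] at this
    exact this.1
  have hvnq : v ∉ q.support.tail := by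
    have := hq.2
    rw [Walk.support_eq_cons, List.nodup_cons] at this
    exact this.1
  rw [Walk.isCycle_def]
  refine ⟨?_, ?_, ?_⟩
  · rw [Walk.isTrail_def, Walk.edges_append, List.nodup_append]
    refine ⟨hp.isTrail.edges_nodup, hq.isTrail.edges_nodup, ?_⟩
    intro e hep e' heq hee
    subst hee
    induction e with
    | h a b =>
      have hadj : G.Adj a b := Walk.adj_of_mem_edges _ hep
      have hap : a ∈ p.support := p.fst_mem_support_of_mem_edges hep
      have hbp : b ∈ p.support := p.snd_mem_support_of_mem_edges hep
      have haq : a ∈ q.support := q.fst_mem_support_of_mem_edges heq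
      have hbq : b ∈ q.support := q.snd_mem_support_of_mem_edges heq
      have ha2 := hdisj a hap haq
      have hb2 := hdisj b hbp hbq
      have hab : a ≠ b := G.ne_of_adj hadj
      have : s(a, b) = s(u, v) := by
        rcases ha2 with rfl | rfl <;> rcases hb2 with rfl | rfl
        · exact absurd rfl hab
        · rfl
        · exact Sym2.eq_swap
        · exact absurd rfl hab
      rw [this] at hep
      have := length_eq_one_of_mem_edges hp hep
      omega
  · intro h
    have := congrArg Walk.length h
    rw [Walk.length_append] at this
    simp only [Walk.length_nil] at this
    omega
  · rw [Walk.tail_support_append, List.nodup_append]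
    refine ⟨hp.2.tail, hq.2.tail, ?_⟩
    intro w hwp w' hwq hww
    subst hww
    rcases hdisj w (List.mem_of_mem_tail hwp) (List.mem_of_mem_tail hwq) with rfl | rfl
    · exact hunp hwp
    · exact hvnq hwq
lemma cycle_card_support [DecidableEq V] {u : V} {c : G.Walk u u} (hc : c.IsCycle) :
    c.support.toFinset.card = c.length := by
  have hnd : c.support.tail.Nodup := hc.2
  cases c with
  | nil => exact absurd rfl hc.1.2
  | cons h p =>
    have hu : u ∈ p.support := p.end_mem_support
    simp only [Walk.support_cons, List.toFinset_cons, Walk.length_cons]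
    rw [Finset.insert_eq_self.2 (by simpa using hu)]
    rw [List.toFinset_card_of_nodup (by simpa using hnd)]
    simp [Walk.length_support]

section CI
variable [DecidableEq V] {u : V} {c : G.Walk u u}

lemma ci_adj (hlen : c.length = 6) (k : ZMod 6) :
    G.Adj (c.getVert k.val) (c.getVert (k+1).val) := by
  have hk : k.val < 6 := k.val_lt
  have hv : (k+1).val = (k.val + 1) % 6 := by
    have := ZMod.val_add k 1
    simpa [ZMod.val_one_eq_one_mod] using this
  rcases Nat.lt_or_ge k.val 5 with h5 | h5
  · have : (k.val + 1) % 6 = k.val + 1 := Nat.mod_eq_of_lt (by omega)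
    rw [hv, this]
    exact c.adj_getVert_succ (by omega)
  · have hk5 : k.val = 5 := by omega
    have h6 : c.getVert 6 = u := by rw [← hlen]; exact c.getVert_length
    have h0 : c.getVert ((k.val + 1) % 6) = u := by rw [hk5]; simpa using c.getVert_zero
    rw [hv, h0]
    have := c.adj_getVert_succ (i := 5) (by omega)
    rw [hk5]
    convert this using 2
    rw [show (5:ℕ)+1 = 6 from rfl, h6]

lemma ci_mem (hlen : c.length = 6) (k : ZMod 6) : c.getVert k.val ∈ c.support :=
  Walk.mem_support_iff_exists_getVert.2 ⟨k.val, rfl, by rw [hlen]; exact le_of_lt k.val_lt⟩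

lemma ci_surj (hlen : c.length = 6) {v : V} (hv : v ∈ c.support) :
    ∃ k : ZMod 6, c.getVert k.val = v := by
  obtain ⟨n, hn, hnle⟩ := Walk.mem_support_iff_exists_getVert.1 hv
  rcases Nat.lt_or_ge n 6 with h6 | h6
  · exact ⟨(n : ZMod 6), by rwa [ZMod.val_natCast, Nat.mod_eq_of_lt h6]⟩
  · have hn6 : n = 6 := by omega
    refine ⟨0, ?_⟩
    have h6' : c.getVert 6 = u := by rw [← hlen]; exact c.getVert_length
    rw [show (0 : ZMod 6).val = 0 from rfl]
    rw [c.getVert_zero, ← h6', ← hn6, hn]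

lemma ci_inj (hc : c.IsCycle) (hlen : c.length = 6) :
    Function.Injective (fun k : ZMod 6 => c.getVert k.val) := by
  have himage : (univ : Finset (ZMod 6)).image (fun k : ZMod 6 => c.getVert k.val)
      = c.support.toFinset := by
    apply Finset.Subset.antisymm
    · intro v hv
      simp only [Finset.mem_image] at hv
      obtain ⟨k, -, rfl⟩ := hv
      simp only [List.mem_toFinset]
      exact ci_mem hlen k
    · intro v hv
      simp only [List.mem_toFinset] at hv
      obtain ⟨k, hk⟩ := ci_surj hlen hv
      exact Finset.mem_image.2 ⟨k, Finset.mem_univ _, hk⟩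
  have hcard : ((univ : Finset (ZMod 6)).image (fun k : ZMod 6 => c.getVert k.val)).card
      = (univ : Finset (ZMod 6)).card := by
    rw [himage, cycle_card_support hc, hlen]
    simp
  have := Finset.injOn_of_card_image_eq hcard
  intro a b hab
  exact this (Finset.mem_coe.2 (mem_univ a)) (Finset.mem_coe.2 (mem_univ b)) hab
end CI
section Kill
variable (hlong : ∀ (v : V) (d : G.Walk v v), d.IsCycle → d.length ≤ 6)
  (ci : ZMod 6 → V) (hadj : ∀ k, G.Adj (ci k) (ci (k+1))) (hinj : Function.Injective ci)
  (p q : V) (hpq : G.Adj p q) (hpc : ∀ k, p ≠ ci k) (hqc : ∀ k, q ≠ ci k)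

section shared
variable (t : ZMod 6)
include hadj
private lemma E1 : G.Adj (ci (t+1)) (ci (t+2)) := by have := hadj (t+1); rwa [add_assoc] at this
private lemma E2 : G.Adj (ci (t+2)) (ci (t+3)) := by have := hadj (t+2); rwa [add_assoc] at this
private lemma E3 : G.Adj (ci (t+3)) (ci (t+4)) := by have := hadj (t+3); rwa [add_assoc] at this
private lemma E4 : G.Adj (ci (t+4)) (ci (t+5)) := by have := hadj (t+4); rwa [add_assoc] at this
private lemma E5 : G.Adj (ci (t+5)) (ci t) := by
  have := hadj (t+5)
  rwa [add_assoc, show (5+1 : ZMod 6) = 0 by decide, add_zero] at this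
end shared

include hlong hadj hinj hpq hpc hqc

lemma kcross5 (t : ZMod 6) (h1 : G.Adj p (ci t)) (h2 : G.Adj q (ci (t+5))) : False := by
  have hcp : ∀ k, ci k ≠ p := fun k => (hpc k).symm
  have hcq : ∀ k, ci k ≠ q := fun k => (hqc k).symm
  have hqp : q ≠ p := fun h => (G.ne_of_adj hpq) h.symm
  have hpq' : p ≠ q := G.ne_of_adj hpq
  have hW : (Walk.cons h1 (Walk.cons (hadj t) (Walk.cons (E1 ci hadj t) (Walk.cons (E2 ci hadj t)
      (Walk.cons (E3 ci hadj t) (Walk.cons (E4 ci hadj t)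
      (Walk.cons h2.symm (Walk.cons hpq.symm Walk.nil)))))))).IsCycle := by
    rw [SimpleGraph.Walk.isCycle_def]
    refine ⟨?_, by simp, ?_⟩
    · rw [SimpleGraph.Walk.isTrail_def]
      simp only [SimpleGraph.Walk.edges_cons, SimpleGraph.Walk.edges_nil, List.nodup_cons,
        List.mem_cons, List.not_mem_nil, or_false, Sym2.eq_iff, List.nodup_nil, and_true]
      simp [hinj.eq_iff, hpc, hcp, hqc, hcq, hqp, hpq', add_right_inj]
      decide
    · simp only [SimpleGraph.Walk.support_cons, SimpleGraph.Walk.support_nil, List.tail_cons,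
        List.nodup_cons, List.mem_cons, List.not_mem_nil, or_false, List.nodup_nil, and_true]
      simp [hinj.eq_iff, hpc, hcp, hqc, hcq, hqp, hpq', add_right_inj]
      decide
  have := hlong p _ hW
  simp at this

lemma kcross4 (t : ZMod 6) (h1 : G.Adj p (ci t)) (h2 : G.Adj q (ci (t+4))) : False := by
  have hcp : ∀ k, ci k ≠ p := fun k => (hpc k).symm
  have hcq : ∀ k, ci k ≠ q := fun k => (hqc k).symm
  have hqp : q ≠ p := fun h => (G.ne_of_adj hpq) h.symm
  have hpq' : p ≠ q := G.ne_of_adj hpq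
  have hW : (Walk.cons h1 (Walk.cons (hadj t) (Walk.cons (E1 ci hadj t) (Walk.cons (E2 ci hadj t)
      (Walk.cons (E3 ci hadj t)
      (Walk.cons h2.symm (Walk.cons hpq.symm Walk.nil))))))).IsCycle := by
    rw [SimpleGraph.Walk.isCycle_def]
    refine ⟨?_, by simp, ?_⟩
    · rw [SimpleGraph.Walk.isTrail_def]
      simp only [SimpleGraph.Walk.edges_cons, SimpleGraph.Walk.edges_nil, List.nodup_cons,
        List.mem_cons, List.not_mem_nil, or_false, Sym2.eq_iff, List.nodup_nil, and_true]
      simp [hinj.eq_iff, hpc, hcp, hqc, hcq, hqp, hpq', add_right_inj]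
      decide
    · simp only [SimpleGraph.Walk.support_cons, SimpleGraph.Walk.support_nil, List.tail_cons,
        List.nodup_cons, List.mem_cons, List.not_mem_nil, or_false, List.nodup_nil, and_true]
      simp [hinj.eq_iff, hpc, hcp, hqc, hcq, hqp, hpq', add_right_inj]
      decide
  have := hlong p _ hW
  simp at this

-- chord (t+1)(t+4): cycle p q c3 c2 c1 c4 c5 c0 p, length 8
lemma kch14 (t : ZMod 6) (h1 : G.Adj p (ci t)) (h2 : G.Adj q (ci (t+3)))
    (hch : G.Adj (ci (t+1)) (ci (t+4))) : False := by
  have hcp : ∀ k, ci k ≠ p := fun k => (hpc k).symm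
  have hcq : ∀ k, ci k ≠ q := fun k => (hqc k).symm
  have hqp : q ≠ p := fun h => (G.ne_of_adj hpq) h.symm
  have hpq' : p ≠ q := G.ne_of_adj hpq
  have hW : (Walk.cons hpq (Walk.cons h2 (Walk.cons (E2 ci hadj t).symm
      (Walk.cons (E1 ci hadj t).symm (Walk.cons hch (Walk.cons (E4 ci hadj t)
      (Walk.cons (E5 ci hadj t) (Walk.cons h1.symm Walk.nil)))))))).IsCycle := by
    rw [SimpleGraph.Walk.isCycle_def]
    refine ⟨?_, by simp, ?_⟩
    · rw [SimpleGraph.Walk.isTrail_def]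
      simp only [SimpleGraph.Walk.edges_cons, SimpleGraph.Walk.edges_nil, List.nodup_cons,
        List.mem_cons, List.not_mem_nil, or_false, Sym2.eq_iff, List.nodup_nil, and_true]
      simp [hinj.eq_iff, hpc, hcp, hqc, hcq, hqp, hpq', add_right_inj]
      decide
    · simp only [SimpleGraph.Walk.support_cons, SimpleGraph.Walk.support_nil, List.tail_cons,
        List.nodup_cons, List.mem_cons, List.not_mem_nil, or_false, List.nodup_nil, and_true]
      simp [hinj.eq_iff, hpc, hcp, hqc, hcq, hqp, hpq', add_right_inj]
      decide
  have := hlong p _ hW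
  simp at this

-- chord (t+2)(t+5): cycle p q c3 c4 c5 c2 c1 c0 p, length 8
lemma kch25 (t : ZMod 6) (h1 : G.Adj p (ci t)) (h2 : G.Adj q (ci (t+3)))
    (hch : G.Adj (ci (t+2)) (ci (t+5))) : False := by
  have hcp : ∀ k, ci k ≠ p := fun k => (hpc k).symm
  have hcq : ∀ k, ci k ≠ q := fun k => (hqc k).symm
  have hqp : q ≠ p := fun h => (G.ne_of_adj hpq) h.symm
  have hpq' : p ≠ q := G.ne_of_adj hpq
  have hW : (Walk.cons hpq (Walk.cons h2 (Walk.cons (E3 ci hadj t)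
      (Walk.cons (E4 ci hadj t) (Walk.cons hch.symm (Walk.cons (E1 ci hadj t).symm
      (Walk.cons (hadj t).symm (Walk.cons h1.symm Walk.nil)))))))).IsCycle := by
    rw [SimpleGraph.Walk.isCycle_def]
    refine ⟨?_, by simp, ?_⟩
    · rw [SimpleGraph.Walk.isTrail_def]
      simp only [SimpleGraph.Walk.edges_cons, SimpleGraph.Walk.edges_nil, List.nodup_cons,
        List.mem_cons, List.not_mem_nil, or_false, Sym2.eq_iff, List.nodup_nil, and_true]
      simp [hinj.eq_iff, hpc, hcp, hqc, hcq, hqp, hpq', add_right_inj]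
      decide
    · simp only [SimpleGraph.Walk.support_cons, SimpleGraph.Walk.support_nil, List.tail_cons,
        List.nodup_cons, List.mem_cons, List.not_mem_nil, or_false, List.nodup_nil, and_true]
      simp [hinj.eq_iff, hpc, hcp, hqc, hcq, hqp, hpq', add_right_inj]
      decide
  have := hlong p _ hW
  simp at this

-- chord (t+1)(t+5): cycle p q c3 c2 c1 c5 c0 p, length 7
lemma kch15 (t : ZMod 6) (h1 : G.Adj p (ci t)) (h2 : G.Adj q (ci (t+3)))
    (hch : G.Adj (ci (t+1)) (ci (t+5))) : False := by
  have hcp : ∀ k, ci k ≠ p := fun k => (hpc k).symm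
  have hcq : ∀ k, ci k ≠ q := fun k => (hqc k).symm
  have hqp : q ≠ p := fun h => (G.ne_of_adj hpq) h.symm
  have hpq' : p ≠ q := G.ne_of_adj hpq
  have hW : (Walk.cons hpq (Walk.cons h2 (Walk.cons (E2 ci hadj t).symm
      (Walk.cons (E1 ci hadj t).symm (Walk.cons hch (Walk.cons (E5 ci hadj t)
      (Walk.cons h1.symm Walk.nil))))))).IsCycle := by
    rw [SimpleGraph.Walk.isCycle_def]
    refine ⟨?_, by simp, ?_⟩
    · rw [SimpleGraph.Walk.isTrail_def]
      simp only [SimpleGraph.Walk.edges_cons, SimpleGraph.Walk.edges_nil, List.nodup_cons,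
        List.mem_cons, List.not_mem_nil, or_false, Sym2.eq_iff, List.nodup_nil, and_true]
      simp [hinj.eq_iff, hpc, hcp, hqc, hcq, hqp, hpq', add_right_inj]
      decide
    · simp only [SimpleGraph.Walk.support_cons, SimpleGraph.Walk.support_nil, List.tail_cons,
        List.nodup_cons, List.mem_cons, List.not_mem_nil, or_false, List.nodup_nil, and_true]
      simp [hinj.eq_iff, hpc, hcp, hqc, hcq, hqp, hpq', add_right_inj]
      decide
  have := hlong p _ hW
  simp at this

-- chord (t+2)(t+4): cycle p q c3 c4 c2 c1 c0 p, length 7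
lemma kch24 (t : ZMod 6) (h1 : G.Adj p (ci t)) (h2 : G.Adj q (ci (t+3)))
    (hch : G.Adj (ci (t+2)) (ci (t+4))) : False := by
  have hcp : ∀ k, ci k ≠ p := fun k => (hpc k).symm
  have hcq : ∀ k, ci k ≠ q := fun k => (hqc k).symm
  have hqp : q ≠ p := fun h => (G.ne_of_adj hpq) h.symm
  have hpq' : p ≠ q := G.ne_of_adj hpq
  have hW : (Walk.cons hpq (Walk.cons h2 (Walk.cons (E3 ci hadj t)
      (Walk.cons hch.symm (Walk.cons (E1 ci hadj t).symm (Walk.cons (hadj t).symm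
      (Walk.cons h1.symm Walk.nil))))))).IsCycle := by
    rw [SimpleGraph.Walk.isCycle_def]
    refine ⟨?_, by simp, ?_⟩
    · rw [SimpleGraph.Walk.isTrail_def]
      simp only [SimpleGraph.Walk.edges_cons, SimpleGraph.Walk.edges_nil, List.nodup_cons,
        List.mem_cons, List.not_mem_nil, or_false, Sym2.eq_iff, List.nodup_nil, and_true]
      simp [hinj.eq_iff, hpc, hcp, hqc, hcq, hqp, hpq', add_right_inj]
      decide
    · simp only [SimpleGraph.Walk.support_cons, SimpleGraph.Walk.support_nil, List.tail_cons,
        List.nodup_cons, List.mem_cons, List.not_mem_nil, or_false, List.nodup_nil, and_true]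
      simp [hinj.eq_iff, hpc, hcp, hqc, hcq, hqp, hpq', add_right_inj]
      decide
  have := hlong p _ hW
  simp at this

end Kill
section Endgame
variable [Fintype V] [DecidableEq V]

lemma endgame1 (ht : OneTough G) (ci : ZMod 6 → V) (hinj : Function.Injective ci)
    (x y : V) (γ : ZMod 6) (hxy : G.Adj x y)
    (hxc : ∀ k, x ≠ ci k) (hyc : ∀ k, y ≠ ci k)
    (hNx : ∀ w, G.Adj x w → w = y ∨ w = ci γ)
    (hNy : ∀ w, G.Adj y w → w = x ∨ w = ci γ) : False := by
  classical
  have hne : ∀ i j : ZMod 6, i ≠ j → ci (γ+i) ≠ ci (γ+j) := by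
    intro i j hij h
    exact hij ((add_right_inj γ).1 (hinj h))
  have hγ0 : ci γ = ci (γ+0) := by rw [add_zero]
  set S : Finset V := {ci γ} with hS
  have hK : ∀ a b : V, a ∉ S → b ∉ S → G.Adj a b → a ∈ ({x, y} : Set V) → b ∈ ({x, y} : Set V) := by
    intro a b ha hb hadj haK
    rcases haK with rfl | rfl
    · rcases hNx b hadj with rfl | rfl
      · right; rfl
      · exact absurd (by simp [hS]) hb
    · rcases hNy b hadj with rfl | rfl
      · left; rfl
      · exact absurd (by simp [hS]) hb
  have h2 : 2 ≤ compCount G ↑S := by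
    refine two_le_compCount G S {x, y} hK x (ci (γ+1)) ?_ ?_ (by left; rfl) ?_
    · simp [hS]; exact hxc γ
    · simp only [hS, Finset.mem_singleton]
      intro h
      exact hne 1 0 (by decide) (h.trans hγ0)
    · intro h
      rcases h with h | h
      · exact hxc _ h.symm
      · exact hyc _ h.symm
  have hc1 : S.card = 1 := by simp [hS]
  have := ht S (by omega)
  omega

lemma endgame2 (ht : OneTough G) (ci : ZMod 6 → V) (hinj : Function.Injective ci)
    (x y : V) (γ : ZMod 6) (hxy : G.Adj x y)
    (hall : ∀ v : V, v = x ∨ v = y ∨ ∃ k, ci k = v)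
    (hxc : ∀ k, x ≠ ci k) (hyc : ∀ k, y ≠ ci k)
    (hNx : ∀ w, G.Adj x w → w = y ∨ w = ci γ ∨ w = ci (γ+3))
    (hNy : ∀ w, G.Adj y w → w = x ∨ w = ci γ ∨ w = ci (γ+3))
    (hn14 : ¬ G.Adj (ci (γ+1)) (ci (γ+4)))
    (hn15 : ¬ G.Adj (ci (γ+1)) (ci (γ+5)))
    (hn24 : ¬ G.Adj (ci (γ+2)) (ci (γ+4)))
    (hn25 : ¬ G.Adj (ci (γ+2)) (ci (γ+5))) : False := by
  classical
  have hne : ∀ i j : ZMod 6, i ≠ j → ci (γ+i) ≠ ci (γ+j) := by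
    intro i j hij h
    exact hij ((add_right_inj γ).1 (hinj h))
  have hγ0 : ci γ = ci (γ+0) := by rw [add_zero]
  set S : Finset V := {ci γ, ci (γ+3)} with hS
  have hcS : ∀ k : ZMod 6, ci (γ+k) ∉ S → k ≠ 0 ∧ k ≠ 3 := by
    intro k hk
    constructor
    · rintro rfl; exact hk (by simp [hS, hγ0])
    · rintro rfl; exact hk (by simp [hS])
  have hSmem : ∀ k : ZMod 6, k ≠ 0 → k ≠ 3 → ci (γ+k) ∉ S := by
    intro k h0 h3
    simp only [hS, Finset.mem_insert, Finset.mem_singleton]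
    push_neg
    exact ⟨by rw [hγ0]; exact hne _ _ h0, hne _ _ h3⟩
  have hdecomp : ∀ k : ZMod 6, ∃ δ : ZMod 6, k = γ + δ := fun k => ⟨k - γ, by ring⟩
  have hdel : ∀ δ : ZMod 6, δ = 0 ∨ δ = 1 ∨ δ = 2 ∨ δ = 3 ∨ δ = 4 ∨ δ = 5 := by decide
  -- K1 = {x, y}
  have hK1 : ∀ a b : V, a ∉ S → b ∉ S → G.Adj a b → a ∈ ({x, y} : Set V) →
      b ∈ ({x, y} : Set V) := by
    intro a b ha hb hadj haK
    rcases haK with rfl | rfl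
    · rcases hNx b hadj with rfl | rfl | rfl
      · right; rfl
      · exact absurd (by simp [hS]) hb
      · exact absurd (by simp [hS]) hb
    · rcases hNy b hadj with rfl | rfl | rfl
      · left; rfl
      · exact absurd (by simp [hS]) hb
      · exact absurd (by simp [hS]) hb
  -- K2 = {ci (γ+1), ci (γ+2)}
  have hK2 : ∀ a b : V, a ∉ S → b ∉ S → G.Adj a b → a ∈ ({ci (γ+1), ci (γ+2)} : Set V) →
      b ∈ ({ci (γ+1), ci (γ+2)} : Set V) := by
    intro a b ha hb hadj haK
    have hbx : b ≠ x := by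
      rintro rfl
      rcases hNx a hadj.symm with rfl | rfl | rfl
      · rcases haK with h | h
        · exact hyc _ h
        · exact hyc _ h
      · rcases haK with h | h
        · exact hne 0 1 (by decide) (hγ0.symm.trans h)
        · exact hne 0 2 (by decide) (hγ0.symm.trans h)
      · rcases haK with h | h
        · exact hne 3 1 (by decide) h
        · exact hne 3 2 (by decide) h
    have hby : b ≠ y := by
      rintro rfl
      rcases hNy a hadj.symm with rfl | rfl | rfl
      · rcases haK with h | h
        · exact hxc _ h
        · exact hxc _ h
      · rcases haK with h | h
        · exact hne 0 1 (by decide) (hγ0.symm.trans h)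
        · exact hne 0 2 (by decide) (hγ0.symm.trans h)
      · rcases haK with h | h
        · exact hne 3 1 (by decide) h
        · exact hne 3 2 (by decide) h
    rcases hall b with rfl | rfl | ⟨k, rfl⟩
    · exact absurd rfl hbx
    · exact absurd rfl hby
    obtain ⟨δ, rfl⟩ := hdecomp k
    obtain ⟨h0, h3⟩ := hcS δ hb
    rcases haK with rfl | rfl
    · -- a = ci (γ+1)
      rcases hdel δ with rfl | rfl | rfl | rfl | rfl | rfl
      · exact absurd rfl h0
      · exact absurd hadj G.irrefl
      · right; rfl
      · exact absurd rfl h3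
      · exact absurd hadj hn14
      · exact absurd hadj hn15
    · -- a = ci (γ+2)
      rcases hdel δ with rfl | rfl | rfl | rfl | rfl | rfl
      · exact absurd rfl h0
      · left; rfl
      · exact absurd hadj G.irrefl
      · exact absurd rfl h3
      · exact absurd hadj hn24
      · exact absurd hadj hn25
  have h3 : 3 ≤ compCount G ↑S := by
    refine three_le_compCount G S {x, y} {ci (γ+1), ci (γ+2)} hK1 hK2
      x (ci (γ+1)) (ci (γ+4)) ?_ (hSmem 1 (by decide) (by decide)) (hSmem 4 (by decide) (by decide))
      (by left; rfl) ?_ (by left; rfl) ?_ ?_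
    · simp only [hS, Finset.mem_insert, Finset.mem_singleton]
      push_neg
      exact ⟨hxc γ, hxc _⟩
    · rintro (h | h)
      · exact hxc _ h.symm
      · exact hyc _ h.symm
    · rintro (h | h)
      · exact hxc _ h.symm
      · exact hyc _ h.symm
    · rintro (h | h)
      · exact hne 4 1 (by decide) h
      · exact hne 4 2 (by decide) h
  have hcard : S.card ≤ 2 := by
    apply le_trans (Finset.card_insert_le _ _)
    simp
  have := ht S (by omega)
  omega
end Endgame
lemma length_rotate [DecidableEq V] {u v : V} {c : G.Walk u u} (h : v ∈ c.support) :
    (c.rotate _ h).length = c.length := by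
  have := (Walk.support_rotate c _ h).perm.length_eq
  have h1 := Walk.length_support (c.rotate _ h)
  have h2 := Walk.length_support c
  have h3 : (c.rotate _ h).support.tail.length = c.support.tail.length := this
  simp only [List.length_tail, h1, h2] at h3
  omega

lemma len_ge_six [Fintype V] [DecidableEq V] (ht : OneTough G)
    {u : V} {c : G.Walk u u} (hc : c.IsCycle)
    (hlong' : ∀ (v : V) (d : G.Walk v v), d.IsCycle → d.length ≤ c.length)
    {a b : V} (hab : G.Adj a b) (ha : a ∉ c.support) (hb : b ∉ c.support) :
    6 ≤ c.length := by
  classical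
  by_contra hlt
  push_neg at hlt
  have hc5 : c.length ≤ 5 := by omega
  have hc3 : 3 ≤ c.length := hc.three_le_length
  have hcnil : ¬ c.Nil := by
    rw [Walk.nil_iff_length_eq]; omega
  -- the component H of a outside c
  set H : Set V := {v | v ∉ c.support ∧ ∃ w : G.Walk a v, ∀ z ∈ w.support, z ∉ c.support}
    with hH
  have haH : a ∈ H := ⟨ha, Walk.nil, by simpa using ha⟩
  have hbH : b ∈ H := ⟨hb, Walk.cons hab Walk.nil, by
    intro z hz
    rcases (by simpa using hz : z = a ∨ z = b) with rfl | rfl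
    · exact ha
    · exact hb⟩
  have hHc : ∀ v ∈ H, v ∉ c.support := fun v hv => hv.1
  have hHclosed : ∀ v w : V, v ∈ H → G.Adj v w → w ∉ c.support → w ∈ H := by
    rintro v w ⟨hvc, W, hW⟩ hadj hwc
    refine ⟨hwc, W.append (Walk.cons hadj Walk.nil), ?_⟩
    intro z hz
    rw [Walk.mem_support_append_iff] at hz
    rcases hz with hz | hz
    · exact hW z hz
    · rcases (by simpa using hz : z = v ∨ z = w) with rfl | rfl
      · exact hvc
      · exact hwc
  have hHpath : ∀ h h' : V, h ∈ H → h' ∈ H →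
      ∃ R : G.Walk h h', R.IsPath ∧ ∀ z ∈ R.support, z ∉ c.support := by
    rintro h h' ⟨-, w1, hw1⟩ ⟨-, w2, hw2⟩
    refine ⟨(w1.reverse.append w2).bypass, Walk.bypass_isPath _, ?_⟩
    intro z hz
    have hz2 := Walk.support_bypass_subset _ hz
    rw [Walk.mem_support_append_iff] at hz2
    rcases hz2 with hz2 | hz2
    · exact hw1 z (by rwa [Walk.support_reverse, List.mem_reverse] at hz2)
    · exact hw2 z hz2
  -- attachment vertices
  set A : Set V := {s | s ∈ c.support ∧ ∃ h ∈ H, G.Adj s h} with hA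
  have humem : u ∈ c.support := c.start_mem_support
  have hu1mem : c.getVert 1 ∈ c.support :=
    Walk.mem_support_iff_exists_getVert.2 ⟨1, rfl, by omega⟩
  have hu01 : u ≠ c.getVert 1 := by
    have := c.adj_getVert_succ (i := 0) (by omega)
    rw [c.getVert_zero] at this
    exact G.ne_of_adj this
  -- there exist two distinct attachments
  have hpair : ∃ s t : V, s ∈ A ∧ t ∈ A ∧ s ≠ t := by
    by_contra hcon
    push_neg at hcon
    by_cases hAne : ∃ s, s ∈ A
    · obtain ⟨s₀, hs₀⟩ := hAne
      have hKcl : ∀ p q : V, p ∉ ({s₀} : Finset V) → q ∉ ({s₀} : Finset V) → G.Adj p q →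
          p ∈ H → q ∈ H := by
        intro p q hp hq hadj hpH
        by_cases hqc : q ∈ c.support
        · have hqA : q ∈ A := ⟨hqc, p, hpH, hadj.symm⟩
          exact absurd (by simpa using hcon q s₀ hqA hs₀) hq
        · exact hHclosed p q hpH hadj hqc
      have hs₀c : s₀ ∈ c.support := hs₀.1
      obtain ⟨w, hwc, hws⟩ : ∃ w, w ∈ c.support ∧ w ∉ ({s₀} : Finset V) := by
        by_cases h0 : u = s₀
        · exact ⟨c.getVert 1, hu1mem, by simp [← h0, Ne.symm hu01]⟩
        · exact ⟨u, humem, by simpa using h0⟩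
      have h2 := two_le_compCount G {s₀} H hKcl a w
        (by simp only [Finset.mem_singleton]; rintro rfl; exact ha hs₀c) hws haH
        (fun h => hHc w h hwc)
      have hcard : ({s₀} : Finset V).card = 1 := by simp
      have hle := ht {s₀} (by omega)
      omega
    · push_neg at hAne
      have hKcl : ∀ p q : V, p ∉ (∅ : Finset V) → q ∉ (∅ : Finset V) → G.Adj p q →
          p ∈ H → q ∈ H := by
        intro p q hp hq hadj hpH
        by_cases hqc : q ∈ c.support
        · exact absurd ⟨hqc, p, hpH, hadj.symm⟩ (hAne q)
        · exact hHclosed p q hpH hadj hqc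
      have h2 := two_le_compCount G ∅ H hKcl a u (by simp) (by simp) haH
        (fun h => hHc u h humem)
      have hcard : (∅ : Finset V).card = 0 := by simp
      have hle := ht ∅ (by omega)
      omega
  obtain ⟨s, t, hsA, htA, hst⟩ := hpair
  -- the common-neighbor lemma
  have Hcommon : ∀ s' t' : V, s' ∈ A → t' ∈ A → s' ≠ t' →
      ∀ h h' : V, h ∈ H → h' ∈ H → G.Adj s' h → G.Adj t' h' → h = h' := by
    intro s' t' hs' ht' hst' h h' hh hh' hsh hth
    obtain ⟨R, hR, hRc⟩ := hHpath h h' hh hh'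
    have hs'c : s' ∈ c.support := hs'.1
    have ht'c : t' ∈ c.support := ht'.1
    -- the path W : s' → t' through H
    have hinner : (R.append (Walk.cons hth.symm Walk.nil)).IsPath :=
      isPath_concat' hR hth.symm (fun h => hRc t' h ht'c)
    have hWpath : (Walk.cons hsh (R.append (Walk.cons hth.symm Walk.nil))).IsPath := by
      rw [Walk.cons_isPath_iff]
      refine ⟨hinner, ?_⟩
      intro hmem
      rw [Walk.mem_support_append_iff] at hmem
      rcases hmem with hmem | hmem
      · exact hRc s' hmem hs'c
      · rcases (by simpa using hmem : s' = h' ∨ s' = t') with rfl | rfl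
        · exact hRc s' (Walk.end_mem_support R) hs'c
        · exact hst' rfl
    set W : G.Walk s' t' := Walk.cons hsh (R.append (Walk.cons hth.symm Walk.nil)) with hW
    have hWlen : W.length = R.length + 2 := by
      simp [hW, Walk.length_append]
    have hWsup : ∀ z ∈ W.support, z ∈ c.support → z = s' ∨ z = t' := by
      intro z hz hzc
      rw [hW, Walk.support_cons, List.mem_cons] at hz
      rcases hz with rfl | hz
      · exact Or.inl rfl
      rw [Walk.mem_support_append_iff] at hz
      rcases hz with hz | hz
      · exact absurd hzc (hRc z hz)
      · rcases (by simpa using hz : z = h' ∨ z = t') with rfl | rfl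
        · exact absurd hzc (hRc z (Walk.end_mem_support R))
        · exact Or.inr rfl
    -- the two arcs of c between s' and t'
    have hc1 : (c.rotate _ hs'c).IsCycle := hc.rotate hs'c
    have htc1 : t' ∈ (c.rotate _ hs'c).support := mem_rotate_support hs'c hcnil ht'c
    obtain ⟨hq, hr, hqr⟩ := cycle_takeUntil_isPath hc1 htc1 (Ne.symm hst')
    set q := (c.rotate _ hs'c).takeUntil t' htc1 with hqdef
    set r := (c.rotate _ hs'c).dropUntil t' htc1 with hrdef
    have hqsub : ∀ z ∈ q.support, z ∈ c.support := fun z hz =>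
      rotate_support_subset hs'c (Walk.support_takeUntil_subset _ htc1 hz)
    have hrsub : ∀ z ∈ r.support, z ∈ c.support := fun z hz =>
      rotate_support_subset hs'c (Walk.support_dropUntil_subset _ htc1 hz)
    have hqlen : 1 ≤ q.length := by
      rcases Nat.eq_zero_or_pos q.length with h0 | h0
      · exact absurd (Walk.eq_of_length_eq_zero h0) hst'
      · omega
    have hrlen : 1 ≤ r.length := by
      rcases Nat.eq_zero_or_pos r.length with h0 | h0
      · exact absurd (Walk.eq_of_length_eq_zero h0) (Ne.symm hst')
      · omega
    have hqr6 : q.length + r.length = c.length := by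
      rw [hqr, length_rotate]
    -- first cycle : W.append r
    have hcyc1 : (W.append r).IsCycle := by
      refine isCycle_append hWpath hr (by omega) hrlen ?_
      intro z hz hz2
      have := hWsup z hz (hrsub z hz2)
      tauto
    have hlen1 := hlong' _ _ hcyc1
    rw [Walk.length_append] at hlen1
    -- second cycle : W.append q.reverse
    have hcyc2 : (W.append q.reverse).IsCycle := by
      refine isCycle_append hWpath hq.reverse (by omega) (by rwa [Walk.length_reverse]) ?_
      intro z hz hz2
      rw [Walk.support_reverse, List.mem_reverse] at hz2
      have := hWsup z hz (hqsub z hz2)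
      tauto
    have hlen2 := hlong' _ _ hcyc2
    rw [Walk.length_append, Walk.length_reverse] at hlen2
    -- conclude R.length = 0
    have hR0 : R.length = 0 := by omega
    exact Walk.eq_of_length_eq_zero hR0
  -- pick the common attachment vertex h
  obtain ⟨hsc, hs0, hs0H, hshs0⟩ := id hsA
  -- every H-to-cycle edge goes through hs0
  have hthrough : ∀ w ∈ H, ∀ sc ∈ c.support, G.Adj sc w → w = hs0 := by
    intro w hw sc hscc hadj
    obtain ⟨-, ht0, ht0H, htht0⟩ := id htA
    by_cases hss : sc = s
    · subst hss
      have h1 := Hcommon sc t ⟨hscc, w, hw, hadj⟩ htA hst w ht0 hw ht0H hadj htht0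
      have h2 := Hcommon sc t ⟨hscc, hs0, hs0H, hshs0⟩ htA hst hs0 ht0 hs0H ht0H hshs0 htht0
      rw [h1, ← h2]
    · exact Hcommon sc s ⟨hscc, w, hw, hadj⟩ hsA hss w hs0 hw hs0H hadj hshs0
  -- a vertex of H other than hs0
  obtain ⟨w0, hw0H, hw0ne⟩ : ∃ w0, w0 ∈ H ∧ w0 ≠ hs0 := by
    by_cases hah : a = hs0
    · exact ⟨b, hbH, fun h => (G.ne_of_adj hab) (hah.trans h.symm)⟩
    · exact ⟨a, haH, hah⟩
  -- final toughness violation with S = {hs0}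
  have hKcl : ∀ p q : V, p ∉ ({hs0} : Finset V) → q ∉ ({hs0} : Finset V) → G.Adj p q →
      p ∈ H \ {hs0} → q ∈ H \ {hs0} := by
    intro p q hp hq hadj ⟨hpH, hpne⟩
    have hqh : q ≠ hs0 := by simpa using hq
    by_cases hqc : q ∈ c.support
    · exact absurd (hthrough p hpH q hqc hadj.symm) (by simpa using hpne)
    · exact ⟨hHclosed p q hpH hadj hqc, hqh⟩
  have h2 := two_le_compCount G {hs0} (H \ {hs0}) hKcl w0 u
    (by simpa using hw0ne)
    (by simp only [Finset.mem_singleton]; intro h; exact hHc hs0 hs0H (h ▸ humem))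
    ⟨hw0H, hw0ne⟩ (fun h => hHc u h.1 humem)
  have hcard : ({hs0} : Finset V).card = 1 := by simp
  have hle := ht {hs0} (by omega)
  omega

lemma part1 [Fintype V] [DecidableEq V] (G : SimpleGraph V) [DecidableRel G.Adj]
    (ht : OneTough G) (hδ : G.minDegree = 2) (hn : Fintype.card V ≤ 8)
    (u : V) (c : G.Walk u u) (hlc : IsLongestCycle c) (hc6 : 6 ≤ c.length)
    (x y : V) (P : G.Walk x y) (hP : IsLongestPathOutside c P) (hP1 : 1 ≤ P.length) : False := by
  classical
  obtain ⟨hc, hlong'⟩ := hlc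
  obtain ⟨hPpath, hPavoid, hPmax⟩ := hP
  -- counting
  have hdisj : Disjoint c.support.toFinset P.support.toFinset := by
    rw [Finset.disjoint_left]
    intro v hv hv'
    exact hPavoid v (by simpa using hv') (by simpa using hv)
  have hcardc : c.support.toFinset.card = c.length := cycle_card_support hc
  have hcardP : P.support.toFinset.card = P.length + 1 := by
    rw [List.toFinset_card_of_nodup hPpath.2, Walk.length_support]
  have hunion : (c.support.toFinset ∪ P.support.toFinset).card = c.length + P.length + 1 := by
    rw [Finset.card_union_of_disjoint hdisj, hcardc, hcardP]
    omega
  have hle : (c.support.toFinset ∪ P.support.toFinset).card ≤ Fintype.card V :=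
    Finset.card_le_univ _
  have hlen : c.length = 6 := by omega
  have hPlen : P.length = 1 := by omega
  have hcard8 : (c.support.toFinset ∪ P.support.toFinset).card = Fintype.card V := by omega
  have huniv : ∀ v : V, v ∈ c.support ∨ v ∈ P.support := by
    intro v
    have := Finset.eq_univ_of_card _ hcard8
    have hv : v ∈ c.support.toFinset ∪ P.support.toFinset := this ▸ Finset.mem_univ v
    rcases Finset.mem_union.1 hv with h | h
    · left; simpa using h
    · right; simpa using h
  have hlong : ∀ (v : V) (d : G.Walk v v), d.IsCycle → d.length ≤ 6 := fun v d hd =>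
    hlen ▸ hlong' v d hd
  -- the cycle indexing
  set ci : ZMod 6 → V := fun k => c.getVert k.val with hci
  have hadjci : ∀ k, G.Adj (ci k) (ci (k+1)) := fun k => ci_adj hlen k
  have hinjci : Function.Injective ci := ci_inj hc hlen
  have hmem : ∀ k, ci k ∈ c.support := fun k => ci_mem hlen k
  have hsur : ∀ v ∈ c.support, ∃ k, ci k = v := fun v hv => ci_surj hlen hv
  -- P is a single edge
  have hxy : G.Adj x y := by
    have h0 := P.adj_getVert_succ (i := 0) (by omega)
    rwa [P.getVert_zero, show (0+1 : ℕ) = P.length by omega, P.getVert_length] at h0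
  have hxy' : x ≠ y := G.ne_of_adj hxy
  have hPsup : ∀ v ∈ P.support, v = x ∨ v = y := by
    intro v hv
    obtain ⟨n, hn, hnle⟩ := Walk.mem_support_iff_exists_getVert.1 hv
    rw [hPlen] at hnle
    interval_cases n
    · left; rw [← hn, P.getVert_zero]
    · right; rw [← hn, ← hPlen, P.getVert_length]
  have hxnc : x ∉ c.support := hPavoid x P.start_mem_support
  have hync : y ∉ c.support := hPavoid y P.end_mem_support
  have hxc : ∀ k, x ≠ ci k := fun k h => hxnc (h ▸ hmem k)
  have hyc : ∀ k, y ≠ ci k := fun k h => hync (h ▸ hmem k)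
  have hall : ∀ v : V, v = x ∨ v = y ∨ ∃ k, ci k = v := by
    intro v
    rcases huniv v with h | h
    · right; right; exact hsur v h
    · rcases hPsup v h with h' | h'
      · left; exact h'
      · right; left; exact h'
  -- degree conditions
  have : Nonempty V := ⟨x⟩
  have hdeg : ∀ v : V, 2 ≤ G.degree v := fun v => hδ ▸ G.minDegree_le_degree v
  have hattach : ∀ v w : V, ∃ z, G.Adj v z ∧ z ≠ w := by
    intro v w
    by_contra hcon
    push_neg at hcon
    have hsub : G.neighborFinset v ⊆ {w} := by
      intro z hz
      simp only [Finset.mem_singleton]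
      exact hcon z (by simpa using hz)
    have hle1 : (G.neighborFinset v).card ≤ 1 := by
      simpa using Finset.card_le_card hsub
    have h2 : 2 ≤ (G.neighborFinset v).card := by
      rw [G.card_neighborFinset_eq_degree]; exact hdeg v
    omega
  obtain ⟨kx, hkx⟩ : ∃ k, G.Adj x (ci k) := by
    obtain ⟨z, hz, hzy⟩ := hattach x y
    have hzx : z ≠ x := fun h => G.irrefl (v := x) (h ▸ hz)
    rcases hall z with rfl | rfl | ⟨k, rfl⟩
    · exact absurd rfl hzx
    · exact absurd rfl hzy
    · exact ⟨k, hz⟩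
  obtain ⟨ky, hky⟩ : ∃ k, G.Adj y (ci k) := by
    obtain ⟨z, hz, hzx⟩ := hattach y x
    have hzy : z ≠ y := fun h => G.irrefl (v := y) (h ▸ hz)
    rcases hall z with rfl | rfl | ⟨k, rfl⟩
    · exact absurd rfl hzx
    · exact absurd rfl hzy
    · exact ⟨k, hz⟩
  -- cross lemma
  have hplus3 : ∀ a b : ZMod 6, a = b + 3 → b = a + 3 := by
    intro a b h
    rw [h, add_assoc, show (3+3 : ZMod 6) = 0 by decide, add_zero]
  have C1 : ∀ a b : ZMod 6, G.Adj x (ci a) → G.Adj y (ci b) → a ≠ b → b = a + 3 := by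
    intro a b hxa hyb hab
    have hd : b - a = 1 ∨ b - a = 2 ∨ b - a = 3 ∨ b - a = 4 ∨ b - a = 5 := by
      have h0 : b - a ≠ 0 := sub_ne_zero.2 (Ne.symm hab)
      have hgen : ∀ d : ZMod 6, d ≠ 0 → d = 1 ∨ d = 2 ∨ d = 3 ∨ d = 4 ∨ d = 5 := by decide
      exact hgen _ h0
    have hb : b = a + (b - a) := by ring
    rcases hd with h | h | h | h | h
    · refine absurd (kcross5 hlong ci hadjci hinjci y x hxy.symm hyc hxc b hyb ?_) not_false
      have hba : b + 5 = a := by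
        rw [hb, h, add_assoc, show (1+5:ZMod 6) = 0 by decide, add_zero]
      rwa [hba]
    · refine absurd (kcross4 hlong ci hadjci hinjci y x hxy.symm hyc hxc b hyb ?_) not_false
      have hba : b + 4 = a := by
        rw [hb, h, add_assoc, show (2+4:ZMod 6) = 0 by decide, add_zero]
      rwa [hba]
    · rw [hb, h]
    · refine absurd (kcross4 hlong ci hadjci hinjci x y hxy hxc hyc a hxa ?_) not_false
      have hba : a + 4 = b := by rw [hb, h]
      rwa [hba]
    · refine absurd (kcross5 hlong ci hadjci hinjci x y hxy hxc hyc a hxa ?_) not_false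
      have hba : a + 5 = b := by rw [hb, h]
      rwa [hba]
  -- find γ with all attachments in {γ, γ+3}
  obtain ⟨γ, hconx, hcony⟩ : ∃ γ : ZMod 6, (∀ k, G.Adj x (ci k) → k = γ ∨ k = γ + 3) ∧
      (∀ k, G.Adj y (ci k) → k = γ ∨ k = γ + 3) := by
    by_cases hxky : kx = ky
    · refine ⟨kx, ?_, ?_⟩
      · intro k hk
        rcases eq_or_ne k kx with rfl | hne
        · exact Or.inl rfl
        · right
          exact hplus3 _ _ (C1 k kx hk (hxky ▸ hky) hne)
      · intro k hk
        rcases eq_or_ne kx k with rfl | hne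
        · exact Or.inl rfl
        · right
          exact C1 kx k hkx hk hne
    · have hky3 : ky = kx + 3 := C1 kx ky hkx hky hxky
      refine ⟨kx, ?_, ?_⟩
      · intro k hk
        rcases eq_or_ne k ky with rfl | hne
        · right; exact hky3
        · rcases eq_or_ne k kx with rfl | hne2
          · exact Or.inl rfl
          · have := C1 k ky hk hky hne
            have hk2 : k = ky + 3 := hplus3 _ _ this
            rw [hky3] at hk2
            left
            rw [hk2, add_assoc, show (3+3:ZMod 6) = 0 by decide, add_zero]
      · intro k hk
        rcases eq_or_ne kx k with rfl | hne
        · exact Or.inl rfl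
        · right; exact C1 kx k hkx hk hne
  -- neighbor characterizations
  have hNx : ∀ w, G.Adj x w → w = y ∨ w = ci γ ∨ w = ci (γ+3) := by
    intro w hw
    rcases hall w with rfl | rfl | ⟨k, rfl⟩
    · exact absurd hw G.irrefl
    · exact Or.inl rfl
    · rcases hconx k hw with rfl | rfl
      · exact Or.inr (Or.inl rfl)
      · exact Or.inr (Or.inr rfl)
  have hNy : ∀ w, G.Adj y w → w = x ∨ w = ci γ ∨ w = ci (γ+3) := by
    intro w hw
    rcases hall w with rfl | rfl | ⟨k, rfl⟩
    · exact Or.inl rfl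
    · exact absurd hw G.irrefl
    · rcases hcony k hw with rfl | rfl
      · exact Or.inr (Or.inl rfl)
      · exact Or.inr (Or.inr rfl)
  by_cases hhit3 : G.Adj x (ci (γ+3)) ∨ G.Adj y (ci (γ+3))
  · by_cases hhit0 : G.Adj x (ci γ) ∨ G.Adj y (ci γ)
    · -- both endpoints of the S-pair are hit: extract a cross pair (p, q)
      obtain ⟨p, q, hpq, hpqx, hp0, hq3⟩ : ∃ p q : V, G.Adj p q ∧
          ((p = x ∧ q = y) ∨ (p = y ∧ q = x)) ∧ G.Adj p (ci γ) ∧ G.Adj q (ci (γ+3)) := by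
        rcases hhit0 with h0 | h0 <;> rcases hhit3 with h3 | h3
        · -- x hits both; use y's attachment
          rcases hcony ky hky with rfl | rfl
          · exact ⟨y, x, hxy.symm, Or.inr ⟨rfl, rfl⟩, hky, h3⟩
          · exact ⟨x, y, hxy, Or.inl ⟨rfl, rfl⟩, h0, hky⟩
        · exact ⟨x, y, hxy, Or.inl ⟨rfl, rfl⟩, h0, h3⟩
        · exact ⟨y, x, hxy.symm, Or.inr ⟨rfl, rfl⟩, h0, h3⟩
        · rcases hconx kx hkx with rfl | rfl
          · exact ⟨x, y, hxy, Or.inl ⟨rfl, rfl⟩, hkx, h3⟩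
          · exact ⟨y, x, hxy.symm, Or.inr ⟨rfl, rfl⟩, h0, hkx⟩
      have hpc : ∀ k, p ≠ ci k := by
        rcases hpqx with ⟨rfl, rfl⟩ | ⟨rfl, rfl⟩
        · exact hxc
        · exact hyc
      have hqc : ∀ k, q ≠ ci k := by
        rcases hpqx with ⟨rfl, rfl⟩ | ⟨rfl, rfl⟩
        · exact hyc
        · exact hxc
      exact endgame2 ht ci hinjci x y γ hxy hall hxc hyc hNx hNy
        (fun h => kch14 hlong ci hadjci hinjci p q hpq hpc hqc γ hp0 hq3 h)
        (fun h => kch15 hlong ci hadjci hinjci p q hpq hpc hqc γ hp0 hq3 h)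
        (fun h => kch24 hlong ci hadjci hinjci p q hpq hpc hqc γ hp0 hq3 h)
        (fun h => kch25 hlong ci hadjci hinjci p q hpq hpc hqc γ hp0 hq3 h)
    · -- nothing attaches to ci γ: use endgame1 at γ+3
      push_neg at hhit0
      refine endgame1 ht ci hinjci x y (γ+3) hxy hxc hyc ?_ ?_
      · intro w hw
        rcases hNx w hw with rfl | rfl | rfl
        · exact Or.inl rfl
        · exact absurd hw hhit0.1
        · exact Or.inr rfl
      · intro w hw
        rcases hNy w hw with rfl | rfl | rfl
        · exact Or.inl rfl
        · exact absurd hw hhit0.2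
        · exact Or.inr rfl
  · -- nothing attaches to ci (γ+3): use endgame1 at γ
    push_neg at hhit3
    refine endgame1 ht ci hinjci x y γ hxy hxc hyc ?_ ?_
    · intro w hw
      rcases hNx w hw with rfl | rfl | rfl
      · exact Or.inl rfl
      · exact Or.inr rfl
      · exact absurd hw hhit3.1
    · intro w hw
      rcases hNy w hw with rfl | rfl | rfl
      · exact Or.inl rfl
      · exact Or.inr rfl
      · exact absurd hw hhit3.2

end AuxProofs

theorem stmt_10 [Fintype V] [DecidableEq V] (G : SimpleGraph V) [DecidableRel G.Adj]
    (ht : OneTough G) (hδ : G.minDegree = 2) (hn : Fintype.card V ≤ 8) :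
    (∀ (u : V) (c : G.Walk u u), IsLongestCycle c → 6 ≤ c.length →
      ∀ (x y : V) (P : G.Walk x y), IsLongestPathOutside c P → 1 ≤ P.length → False) ∧
    ∀ (u : V) (c : G.Walk u u), IsLongestCycle c → IsDominating c := by
  constructor
  · intro u c hlc hc6 x y P hP hP1
    exact part1 G ht hδ hn u c hlc hc6 x y P hP hP1
  · intro u c hlc
    by_contra hdom
    rw [IsDominating] at hdom
    push_neg at hdom
    obtain ⟨a, b, hab, ha, hb⟩ := hdom
    have h6 := len_ge_six ht hlc.1 hlc.2 hab ha hb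
    set L : Set ℕ :=
      {n | ∃ (x y : V) (q : G.Walk x y), q.IsPath ∧ AvoidsCycle c q ∧ q.length = n} with hL
    have h1L : 1 ∈ L := by
      refine ⟨a, b, Walk.cons hab Walk.nil, ?_, ?_, by simp⟩
      · rw [Walk.cons_isPath_iff]
        refine ⟨Walk.IsPath.nil, ?_⟩
        simpa using G.ne_of_adj hab
      · intro v hv
        rcases (by simpa using hv : v = a ∨ v = b) with rfl | rfl
        · exact ha
        · exact hb
    have hbdd : BddAbove L := by
      refine ⟨Fintype.card V, ?_⟩
      rintro n ⟨x, y, q, hq, -, rfl⟩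
      exact le_of_lt hq.length_lt
    have hmem := Nat.sSup_mem ⟨1, h1L⟩ hbdd
    obtain ⟨x, y, q, hq, hqa, hqlen⟩ := hmem
    refine part1 G ht hδ hn u c hlc h6 x y q ⟨hq, hqa, ?_⟩ ?_
    · intro a' b' q' hq' hqa'
      rw [hqlen]
      exact le_csSup hbdd ⟨a', b', q', hq', hqa', rfl⟩
    · rw [hqlen]
      exact le_csSup hbdd h1L
end Paper
end

section
/- Let G be a graph, C a longest cycle, and P = x…y a longest path in G \ C of length p ≥ 0. Let ξ₁,…,ξ_s be the vertices of N_C(x) ∪ N_C(y) in cyclic order, with elementary segments I_i. Then every elementary segment has length at least 2; moreover, if an elementary segment I_i has an endpoint in N_C(x) ∩ N_C(y), or one endpoint in N_C(x) \ N_C(y) and the other in N_C(y) \ N_C(x), then |I_i| ≥ p + 2. -/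
open SimpleGraph Finset

namespace Paper

variable {V : Type*}

section AuxLemmas

variable {G : SimpleGraph V}

lemma mem_support_of_mem_edges'' {v w r : V} (p : G.Walk v w) {e : Sym2 V}
    (he : e ∈ p.edges) (hr : r ∈ e) : r ∈ p.support := by
  induction e using Sym2.ind with
  | _ s t =>
    rw [Sym2.mem_iff] at hr
    rcases hr with rfl | rfl
    · exact Walk.fst_mem_support_of_mem_edges p he
    · exact Walk.snd_mem_support_of_mem_edges p he

lemma isCycle_reverse' {u : V} {p : G.Walk u u} (hp : p.IsCycle) : p.reverse.IsCycle := by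
  rw [Walk.isCycle_def]
  refine ⟨(Walk.reverse_isTrail_iff p).mpr hp.isCircuit.isTrail, ?_, ?_⟩
  · intro hnil
    apply hp.ne_nil
    have := congrArg Walk.reverse hnil
    simpa using this
  · rw [Walk.support_reverse, List.tail_reverse, List.nodup_reverse]
    have hs := p.support_eq_cons
    have htne : p.support.tail ≠ [] := by
      have h3 := hp.three_le_length
      have hl := p.length_support
      intro h0
      rw [hs, h0] at hl
      simp only [List.length_cons, List.length_nil] at hl
      omega
    obtain ⟨z, t, ht⟩ := List.exists_cons_of_ne_nil htne
    have h6 : p.support.getLast? = some u := by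
      rw [List.getLast?_eq_getLast_of_ne_nil p.support_ne_nil]
      congr 1
      exact p.getLast_support
    have h5 : (z :: t).getLast? = some u := by
      rwa [hs, ht, List.getLast?_cons_cons] at h6
    have heq : (z :: t).dropLast ++ [u] = z :: t :=
      List.dropLast_append_getLast? u (Option.mem_def.mpr h5)
    have hnd : (z :: t).Nodup := ht ▸ hp.support_nodup
    rw [hs, ht, List.dropLast_cons₂]
    refine List.nodup_cons.mpr ⟨?_, (List.dropLast_sublist _).nodup hnd⟩
    intro hu
    rw [← heq] at hnd
    obtain ⟨-, -, hdisj⟩ := List.nodup_append'.mp hnd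
    exact hdisj hu (List.mem_singleton_self u)

lemma path_prefix : ∀ {v b w : V} (I : G.Walk v b) (Q : G.Walk v w), I.IsPath → Q.IsPath →
    (∀ e ∈ I.edges, e ∈ Q.edges) → ∃ J : G.Walk b w, Q = I.append J := by
  intro v b w I
  induction I with
  | nil =>
    intro Q _ _ _
    exact ⟨Q, by simp⟩
  | @cons v v' b h I' ih =>
    intro Q hI hQ hsub
    have h1 : s(v, v') ∈ Q.edges := hsub _ (by simp)
    cases Q with
    | nil => simp at h1
    | @cons _ q₁ _ h' Q' =>
      have hq : v' = q₁ := by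
        rw [Walk.edges_cons, List.mem_cons] at h1
        rcases h1 with h1 | h1
        · exact Sym2.congr_right.mp h1
        · exact absurd (Walk.fst_mem_support_of_mem_edges Q' h1)
            ((Walk.cons_isPath_iff _ _).mp hQ).2
      subst hq
      have hsub' : ∀ e ∈ I'.edges, e ∈ Q'.edges := by
        intro e he
        have heQ : e ∈ (Walk.cons h' Q').edges := hsub _ (by simp [he])
        rw [Walk.edges_cons, List.mem_cons] at heQ
        rcases heQ with rfl | heQ
        · exact absurd (Walk.fst_mem_support_of_mem_edges I' he)
            ((Walk.cons_isPath_iff _ _).mp hI).2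
        · exact heQ
      obtain ⟨J, hJ⟩ := ih Q' ((Walk.cons_isPath_iff _ _).mp hI).1 ((Walk.cons_isPath_iff _ _).mp hQ).1 hsub'
      exact ⟨J, by rw [hJ]; rfl⟩

lemma cycle_dichotomy {a b : V} (d : G.Walk a a) (hd : d.IsCycle)
    (I : G.Walk a b) (hIp : I.IsPath) (hab : a ≠ b)
    (hsub : ∀ e ∈ I.edges, e ∈ d.edges) :
    ∃ J : G.Walk b a, d = I.append J ∨ d.reverse = I.append J := by
  cases I with
  | nil => exact absurd rfl hab
  | @cons _ i₁ _ hI1 I'' =>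
    have hI''p : I''.IsPath := ((Walk.cons_isPath_iff _ _).mp hIp).1
    have haI : a ∉ I''.support := ((Walk.cons_isPath_iff _ _).mp hIp).2
    have h1 : s(a, i₁) ∈ d.edges := hsub _ (by simp)
    cases d with
    | nil => exact absurd hd Walk.IsCycle.not_of_nil
    | @cons _ a₁ _ h d' =>
      have hd'p : d'.IsPath := Walk.IsPath.mk' (by
        have hnd := hd.support_nodup
        rwa [Walk.support_cons, List.tail_cons] at hnd)
      rw [Walk.edges_cons, List.mem_cons] at h1
      rcases h1 with h1 | h1
      · have hia : i₁ = a₁ := Sym2.congr_right.mp h1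
        subst hia
        have hsub' : ∀ e ∈ I''.edges, e ∈ d'.edges := by
          intro e he
          have h2 : e ∈ (Walk.cons h d').edges := hsub e (by simp [he])
          rw [Walk.edges_cons, List.mem_cons] at h2
          rcases h2 with rfl | h2
          · exact absurd (Walk.fst_mem_support_of_mem_edges I'' he) haI
          · exact h2
        obtain ⟨J, hJ⟩ := path_prefix I'' d' hI''p hd'p hsub'
        exact ⟨J, Or.inl (by rw [hJ]; rfl)⟩
      · have hd'r : d'.reverse.IsPath := hd'p.reverse
        have h1r : s(a, i₁) ∈ d'.reverse.edges := by
          rw [Walk.edges_reverse, List.mem_reverse]; exact h1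
        cases hrv : d'.reverse with
        | nil => exact absurd rfl h.ne
        | @cons _ z _ h₂ r' =>
          have hz : i₁ = z := by
            rw [hrv, Walk.edges_cons, List.mem_cons] at h1r
            rcases h1r with h2 | h2
            · exact Sym2.congr_right.mp h2
            · rw [hrv] at hd'r
              exact absurd (Walk.fst_mem_support_of_mem_edges r' h2)
                ((Walk.cons_isPath_iff _ _).mp hd'r).2
          subst hz
          have hDrev : (Walk.cons h d').reverse
              = Walk.cons h₂ (r'.append (Walk.cons h.symm Walk.nil)) := by
            rw [Walk.reverse_cons, hrv, Walk.cons_append]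
          have hrevcyc : (Walk.cons h d').reverse.IsCycle := isCycle_reverse' hd
          have hD'p : (r'.append (Walk.cons h.symm Walk.nil)).IsPath := Walk.IsPath.mk' (by
            have hnd := hrevcyc.support_nodup
            rw [hDrev, Walk.support_cons, List.tail_cons] at hnd
            exact hnd)
          have hsub' : ∀ e ∈ I''.edges, e ∈ (r'.append (Walk.cons h.symm Walk.nil)).edges := by
            intro e he
            have h3 : e ∈ (Walk.cons h d').edges := hsub e (by simp [he])
            have h4 : e ∈ (Walk.cons h d').reverse.edges := by
              rwa [Walk.edges_reverse, List.mem_reverse]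
            rw [hDrev, Walk.edges_cons, List.mem_cons] at h4
            rcases h4 with rfl | h4
            · exact absurd (Walk.fst_mem_support_of_mem_edges I'' he) haI
            · exact h4
          obtain ⟨J, hJ⟩ := path_prefix I'' _ hI''p hD'p hsub'
          exact ⟨J, Or.inr (by rw [hDrev, hJ]; rfl)⟩

lemma cycle_split [DecidableEq V] {u a b : V} (c : G.Walk u u) (hc : c.IsCycle)
    (I : G.Walk a b) (hIp : I.IsPath) (hab : a ≠ b)
    (hIe : ∀ e ∈ I.edges, e ∈ c.edges) (ha : a ∈ c.support) :
    ∃ J : G.Walk b a, (I.append J).IsCycle ∧ I.length + J.length = c.length ∧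
      ∀ v ∈ J.support, v ∈ c.support := by
  have hdc : (c.rotate a ha).IsCycle := hc.rotate ha
  have hde : ∀ e ∈ I.edges, e ∈ (c.rotate a ha).edges := fun e he =>
    ((c.rotate_edges a ha).mem_iff).mpr (hIe e he)
  have hdl : (c.rotate a ha).length = c.length := by
    have hperm := (c.rotate_edges a ha).perm.length_eq
    rwa [Walk.length_edges, Walk.length_edges] at hperm
  have hds : ∀ v ∈ (c.rotate a ha).support, v ∈ c.support := by
    intro v hv
    rw [(c.rotate a ha).support_eq_cons] at hv
    rcases List.mem_cons.mp hv with rfl | hv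
    · exact ha
    · have hv' := (Walk.support_rotate c a ha).mem_iff.mp hv
      exact List.mem_of_mem_tail hv'
  obtain ⟨J, hJ | hJ⟩ := cycle_dichotomy (c.rotate a ha) hdc I hIp hab hde
  · refine ⟨J, hJ ▸ hdc, ?_, ?_⟩
    · rw [← Walk.length_append, ← hJ]; exact hdl
    · intro v hv
      exact hds v (hJ ▸ ((Walk.mem_support_append_iff I J).mpr (Or.inr hv)))
  · refine ⟨J, hJ ▸ (isCycle_reverse' hdc), ?_, ?_⟩
    · rw [← Walk.length_append, ← hJ, Walk.length_reverse]; exact hdl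
    · intro v hv
      have hv2 : v ∈ (c.rotate a ha).reverse.support :=
        hJ ▸ ((Walk.mem_support_append_iff I J).mpr (Or.inr hv))
      rw [Walk.support_reverse, List.mem_reverse] at hv2
      exact hds v hv2

lemma key_bound [DecidableEq V] {u x' y' a b : V}
    (c : G.Walk u u) (hc : IsLongestCycle c)
    (Q : G.Walk x' y') (hQp : Q.IsPath) (hQav : ∀ v ∈ Q.support, v ∉ c.support)
    (I : G.Walk a b) (hIp : I.IsPath) (hIlen : 1 ≤ I.length)
    (hIe : ∀ e ∈ I.edges, e ∈ c.edges) (hIs : ∀ v ∈ I.support, v ∈ c.support)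
    (hax : G.Adj a x') (hyb : G.Adj y' b) :
    Q.length + 2 ≤ I.length := by
  have hab : a ≠ b := by
    rintro rfl
    cases I with
    | nil => simp at hIlen
    | cons h I' => exact ((Walk.cons_isPath_iff _ _).mp hIp).2 I'.end_mem_support
  have hac : a ∈ c.support := hIs a I.start_mem_support
  have hbc : b ∈ c.support := hIs b I.end_mem_support
  obtain ⟨J, hK, hlen, hJs⟩ := cycle_split c hc.1 I hIp hab hIe hac
  have hKnd := hK.support_nodup
  rw [Walk.tail_support_append, List.nodup_append'] at hKnd
  obtain ⟨hInd, hJnd, hdisj⟩ := hKnd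
  have hbI : b ∈ I.support.tail := by
    have hbs := I.end_mem_support
    rw [I.support_eq_cons, List.mem_cons] at hbs
    rcases hbs with h | h
    · exact absurd h (Ne.symm hab)
    · exact h
  have hbJ : b ∉ J.support.tail := fun hb => hdisj hbI hb
  have hJp : J.IsPath := Walk.IsPath.mk' (by
    rw [J.support_eq_cons]
    exact List.nodup_cons.mpr ⟨hbJ, hJnd⟩)
  set N : G.Walk a b := Walk.cons hax (Q.concat hyb) with hN
  have hNs : N.support = a :: (Q.support ++ [b]) := by
    simp [hN, Walk.support_cons, Walk.support_concat, List.concat_eq_append]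
  have hNst : N.support.tail = Q.support ++ [b] := by rw [hNs]; rfl
  have hNp : N.IsPath := by
    rw [Walk.isPath_def, hNs]
    refine List.nodup_cons.mpr ⟨?_, ?_⟩
    · intro hmem
      rcases List.mem_append.mp hmem with hmem | hmem
      · exact hQav a hmem hac
      · rw [List.mem_singleton] at hmem; exact hab hmem
    · refine List.nodup_append'.mpr ⟨hQp.support_nodup, List.nodup_singleton _, ?_⟩
      intro v hv hb
      rw [List.mem_singleton] at hb
      subst hb
      exact hQav _ hv hbc
  have hNe : N.edges = s(a, x') :: (Q.edges ++ [s(y', b)]) := by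
    simp [hN, Walk.edges_cons, Walk.edges_concat, List.concat_eq_append]
  have hsab : s(a, b) ∉ N.edges := by
    rw [hNe]
    intro hmem
    rcases List.mem_cons.mp hmem with hmem | hmem
    · have hbx : b = x' := Sym2.congr_right.mp hmem
      exact hQav x' Q.start_mem_support (hbx ▸ hbc)
    rcases List.mem_append.mp hmem with hmem | hmem
    · exact hQav a (Walk.fst_mem_support_of_mem_edges Q hmem) hac
    · rw [List.mem_singleton, Sym2.eq_iff] at hmem
      rcases hmem with ⟨h1, h2⟩ | ⟨h1, h2⟩
      · exact hQav y' Q.end_mem_support (h1 ▸ hac)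
      · exact hab h1
  have hWc : (N.append J).IsCycle := by
    rw [Walk.isCycle_def]
    refine ⟨⟨?_⟩, ?_, ?_⟩
    · rw [Walk.edges_append]
      refine List.nodup_append'.mpr ⟨hNp.isTrail.edges_nodup, hJp.isTrail.edges_nodup, ?_⟩
      intro e heN heJ
      revert heN heJ
      refine Sym2.ind ?_ e
      intro p q heN heJ
      have hpq : G.Adj p q := Walk.adj_of_mem_edges _ heN
      have hmemab : ∀ r, r ∈ N.support → r ∈ J.support → r = a ∨ r = b := by
        intro r hrN hrJ
        have hrc : r ∈ c.support := hJs r hrJ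
        rw [hNs] at hrN
        rcases List.mem_cons.mp hrN with rfl | hrN
        · exact Or.inl rfl
        rcases List.mem_append.mp hrN with hh | hh
        · exact absurd hrc (hQav r hh)
        · exact Or.inr (List.mem_singleton.mp hh)
      have hp := hmemab p (Walk.fst_mem_support_of_mem_edges N heN)
        (Walk.fst_mem_support_of_mem_edges J heJ)
      have hq := hmemab q (Walk.snd_mem_support_of_mem_edges N heN)
        (Walk.snd_mem_support_of_mem_edges J heJ)
      rcases hp with rfl | rfl <;> rcases hq with rfl | rfl
      · exact hpq.ne rfl
      · exact hsab heN
      · exact hsab (Sym2.eq_swap ▸ heN)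
      · exact hpq.ne rfl
    · intro hnil
      have hlen' := congrArg Walk.length hnil
      rw [Walk.length_append] at hlen'
      simp [hN, Walk.length_cons] at hlen'
    · rw [Walk.tail_support_append]
      refine List.nodup_append'.mpr ⟨?_, hJnd, ?_⟩
      · rw [hNst]
        have hnd := hNp.support_nodup
        rw [hNs] at hnd
        exact (List.nodup_cons.mp hnd).2
      · intro v hv hvJ
        rw [hNst] at hv
        rcases List.mem_append.mp hv with hh | hh
        · exact hQav v hh (hJs v (List.mem_of_mem_tail hvJ))
        · rw [List.mem_singleton] at hh
          subst hh
          exact hbJ hvJ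
  have hle := hc.2 a (N.append J) hWc
  rw [Walk.length_append] at hle
  have hNl : N.length = Q.length + 2 := by
    simp [hN, Walk.length_cons, Walk.length_concat]
  omega

end AuxLemmas

theorem stmt_12 [Fintype V] [DecidableEq V] (G : SimpleGraph V) [DecidableRel G.Adj]
    {u x y : V} (c : G.Walk u u) (P : G.Walk x y)
    (hc : IsLongestCycle c) (hP : IsLongestPathOutside c P)
    {a b : V} (I : G.Walk a b)
    (hI : IsSegment c (NC G c x ∪ NC G c y) I) :
    2 ≤ I.length ∧
    ((a ∈ NC G c x ∩ NC G c y ∨ b ∈ NC G c x ∩ NC G c y ∨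
      (a ∈ NC G c x \ NC G c y ∧ b ∈ NC G c y \ NC G c x) ∨
      (a ∈ NC G c y \ NC G c x ∧ b ∈ NC G c x \ NC G c y)) →
      P.length + 2 ≤ I.length) := by
  obtain ⟨hIp, hIlen, haA, hbA, hIs, hIe, hIint⟩ := hI
  obtain ⟨hPp, hPav, hPmax⟩ := hP
  have hNC : ∀ (w v : V), v ∈ NC G c w ↔ G.Adj w v ∧ v ∈ c.support := by
    intro w v
    simp [NC, mem_filter, mem_neighborFinset]
  have hxc : x ∉ c.support := hPav x P.start_mem_support
  have hyc : y ∉ c.support := hPav y P.end_mem_support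
  have hPrevav : ∀ v ∈ P.reverse.support, v ∉ c.support := by
    intro v hv
    rw [Walk.support_reverse, List.mem_reverse] at hv
    exact hPav v hv
  have hnilx : ∀ v ∈ (Walk.nil : G.Walk x x).support, v ∉ c.support := by
    intro v hv
    simp only [Walk.support_nil, List.mem_singleton] at hv
    subst hv; exact hxc
  have hnily : ∀ v ∈ (Walk.nil : G.Walk y y).support, v ∉ c.support := by
    intro v hv
    simp only [Walk.support_nil, List.mem_singleton] at hv
    subst hv; exact hyc
  have key : ∀ {x' y' : V} (Q : G.Walk x' y'), Q.IsPath →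
      (∀ v ∈ Q.support, v ∉ c.support) → G.Adj a x' → G.Adj y' b →
      Q.length + 2 ≤ I.length := by
    intro x' y' Q hQp hQav hax hyb
    exact key_bound c hc Q hQp hQav I hIp hIlen hIe hIs hax hyb
  have hrl : P.reverse.length = P.length := Walk.length_reverse P
  constructor
  · rcases mem_union.mp haA with hax | hay <;> rcases mem_union.mp hbA with hbx | hby
    · have h2 := key (Walk.nil : G.Walk x x) Walk.IsPath.nil hnilx
        ((hNC x a).mp hax).1.symm ((hNC x b).mp hbx).1
      simpa using h2
    · have h2 := key P hPp hPav ((hNC x a).mp hax).1.symm ((hNC y b).mp hby).1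
      omega
    · have h2 := key P.reverse hPp.reverse hPrevav
        ((hNC y a).mp hay).1.symm ((hNC x b).mp hbx).1
      omega
    · have h2 := key (Walk.nil : G.Walk y y) Walk.IsPath.nil hnily
        ((hNC y a).mp hay).1.symm ((hNC y b).mp hby).1
      simpa using h2
  · rintro (hmem | hmem | ⟨ha1, hb1⟩ | ⟨ha1, hb1⟩)
    · obtain ⟨hax, hay⟩ := mem_inter.mp hmem
      rcases mem_union.mp hbA with hbx | hby
      · have h2 := key P.reverse hPp.reverse hPrevav
          ((hNC y a).mp hay).1.symm ((hNC x b).mp hbx).1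
        omega
      · have h2 := key P hPp hPav ((hNC x a).mp hax).1.symm ((hNC y b).mp hby).1
        omega
    · obtain ⟨hbx, hby⟩ := mem_inter.mp hmem
      rcases mem_union.mp haA with hax | hay
      · have h2 := key P hPp hPav ((hNC x a).mp hax).1.symm ((hNC y b).mp hby).1
        omega
      · have h2 := key P.reverse hPp.reverse hPrevav
          ((hNC y a).mp hay).1.symm ((hNC x b).mp hbx).1
        omega
    · have hax := (mem_sdiff.mp ha1).1
      have hby := (mem_sdiff.mp hb1).1
      have h2 := key P hPp hPav ((hNC x a).mp hax).1.symm ((hNC y b).mp hby).1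
      omega
    · have hay := (mem_sdiff.mp ha1).1
      have hbx := (mem_sdiff.mp hb1).1
      have h2 := key P.reverse hPp.reverse hPrevav
        ((hNC y a).mp hay).1.symm ((hNC x b).mp hbx).1
      omega
end Paper
end

section
/- For every graph G in the exceptional class 𝔉₂ (where H₅ ⊆ G ⊆ H₅ + {y₁y₃, y₂y₃, zx₁}, with H₅ built from three disjoint 4-vertex graphs H₁, H₂, H₃ with x_i, y_i ∈ V(H_i) by identifying x₁, x₂, x₃ and adding edges zy₁, zy₂, zy₃, y₁y₂ for an extra vertex z, and δ(G) = 3), one has κ(G) = 2, τ(G) = 1, and no longest cycle of G is a dominating cycle. -/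
open SimpleGraph Finset

namespace Paper

variable {V : Type*}

private lemma walk_closed {G' : SimpleGraph V} (K : Set V)
    (hK : ∀ u v, G'.Adj u v → u ∈ K → v ∈ K) :
    ∀ {u v : V} (w : G'.Walk u v), u ∈ K → v ∈ K := by
  intro u v w
  induction w with
  | nil => exact id
  | cons h p ih => intro hu; exact ih (hK _ _ h hu)

private lemma reachable_closed {G' : SimpleGraph V} (K : Set V)
    (hK : ∀ u v, G'.Adj u v → u ∈ K → v ∈ K) {u v : V} (h : G'.Reachable u v)
    (hu : u ∈ K) : v ∈ K := by
  obtain ⟨w⟩ := h; exact walk_closed K hK w hu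

private lemma cycle_two_nbrs [DecidableEq V] {G : SimpleGraph V} {u v : V} {c : G.Walk u u}
    (hc : c.IsCycle) (hv : v ∈ c.support) :
    ∃ p q : V, p ≠ q ∧ s(v, p) ∈ c.edges ∧ s(v, q) ∈ c.edges := by
  have hc' := hc.rotate hv
  have hmem : ∀ e, e ∈ (c.rotate v hv).edges → e ∈ c.edges := fun e he =>
    (c.rotate_edges v hv).mem_iff.mp he
  obtain ⟨w, h, q, heq⟩ := Walk.not_nil_iff.mp hc'.not_nil
  rw [heq] at hc' hmem
  obtain ⟨hq, hvw⟩ := (Walk.cons_isCycle_iff _ _).mp hc'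
  have hlen : 2 ≤ q.length := by
    have := hc'.three_le_length
    simp only [Walk.length_cons] at this
    omega
  obtain ⟨t, h2, r, hr⟩ := Walk.exists_eq_cons_of_ne h.ne q.reverse
  have edge2q : s(v, t) ∈ q.edges := by
    have : s(v, t) ∈ q.reverse.edges := by rw [hr]; simp
    rwa [Walk.edges_reverse, List.mem_reverse] at this
  have hwt : w ≠ t := by
    rintro rfl
    exact hvw edge2q
  exact ⟨w, t, hwt, hmem _ (by simp), hmem _ (by simp [edge2q])⟩

private lemma filter_or_le {α : Type*} (p q : α → Bool) (l : List α) :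
    (l.filter (fun x => p x || q x)).length ≤ (l.filter p).length + (l.filter q).length := by
  induction l with
  | nil => simp
  | cons a l ih =>
    cases hp : p a <;> cases hq : q a <;> simp [List.filter_cons, hp, hq] <;> omega

private lemma cycle_edges_at_most_two [DecidableEq V] {G : SimpleGraph V} {u v a b d : V}
    {c : G.Walk u u} (hc : c.IsCycle) (hab : a ≠ b) (had : a ≠ d) (hbd : b ≠ d)
    (ha : s(v, a) ∈ c.edges) (hb : s(v, b) ∈ c.edges) (hd : s(v, d) ∈ c.edges) : False := by
  classical
  have hnodupE : c.edges.Nodup := hc.isTrail.edges_nodup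
  have hEdef : c.edges = c.darts.map SimpleGraph.Dart.edge := rfl
  have getd : ∀ w : V, s(v, w) ∈ c.edges →
      ∃ D : G.Dart, D ∈ c.darts ∧ D.edge = s(v, w) := by
    intro w hw
    rw [hEdef] at hw
    obtain ⟨D, hD, hDe⟩ := List.mem_map.mp hw
    exact ⟨D, hD, hDe⟩
  obtain ⟨D1, hD1, hD1e⟩ := getd a ha
  obtain ⟨D2, hD2, hD2e⟩ := getd b hb
  obtain ⟨D3, hD3, hD3e⟩ := getd d hd
  have hP : ∀ (D : G.Dart) (w : V), D.edge = s(v, w) → v = D.fst ∨ v = D.snd := by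
    intro D w hDw
    have h2 : s(D.fst, D.snd) = s(v, w) := hDw
    rw [Sym2.eq_iff] at h2
    rcases h2 with ⟨h1, _⟩ | ⟨_, h2⟩
    · exact Or.inl h1.symm
    · exact Or.inr h2.symm
  have hD12 : D1 ≠ D2 := by
    rintro rfl; rw [hD1e] at hD2e; exact hab (Sym2.congr_right.mp hD2e)
  have hD13 : D1 ≠ D3 := by
    rintro rfl; rw [hD1e] at hD3e; exact had (Sym2.congr_right.mp hD3e)
  have hD23 : D2 ≠ D3 := by
    rintro rfl; rw [hD2e] at hD3e; exact hbd (Sym2.congr_right.mp hD3e)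
  have hmemf : ∀ (D : G.Dart), D.edge = s(v,a) ∨ D.edge = s(v,b) ∨ D.edge = s(v,d) →
      ((D.fst == v) || (D.snd == v)) = true := by
    intro D hD
    have : v = D.fst ∨ v = D.snd := by
      rcases hD with h | h | h
      · exact hP _ _ h
      · exact hP _ _ h
      · exact hP _ _ h
    rcases this with h | h <;> simp [h.symm]
  have hsub : List.Subperm [D1, D2, D3]
      (c.darts.filter (fun D => (D.fst == v) || (D.snd == v))) := by
    apply List.subperm_of_subset
    · simp [List.nodup_cons, hD12, hD13, hD23]
    · intro D hD
      simp only [List.mem_cons, List.not_mem_nil, or_false] at hD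
      rcases hD with rfl | rfl | rfl
      · exact List.mem_filter.mpr ⟨hD1, hmemf _ (Or.inl hD1e)⟩
      · exact List.mem_filter.mpr ⟨hD2, hmemf _ (Or.inr (Or.inl hD2e))⟩
      · exact List.mem_filter.mpr ⟨hD3, hmemf _ (Or.inr (Or.inr hD3e))⟩
  have hlow : 3 ≤ (c.darts.filter (fun D => (D.fst == v) || (D.snd == v))).length := by
    calc (3:ℕ) = [D1, D2, D3].length := rfl
      _ ≤ _ := hsub.length_le
  have hsplit := filter_or_le (fun D : G.Dart => D.fst == v) (fun D : G.Dart => D.snd == v) c.darts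
  -- upper bounds via counts in support
  have hfst : (c.darts.filter (fun D : G.Dart => D.fst == v)).length
      = (c.darts.map (·.fst)).count v := by
    rw [List.count, ← List.countP_eq_length_filter, List.countP_map]
    rfl
  have hsnd : (c.darts.filter (fun D : G.Dart => D.snd == v)).length
      = (c.darts.map (·.snd)).count v := by
    rw [List.count, ← List.countP_eq_length_filter, List.countP_map]
    rfl
  have h1 : c.support = u :: c.support.tail := c.support_eq_cons
  have htne : c.support.tail ≠ [] := by
    intro hh
    have h3 := hc.three_le_length
    have h4 := c.length_support
    rw [h1, hh] at h4
    simp only [List.length_cons, List.length_nil] at h4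
    omega
  have htnd : c.support.tail.Nodup := hc.support_nodup
  have hlast : c.support.tail.getLast htne = u := by
    have hg : c.support.getLast (by rw [h1]; exact List.cons_ne_nil _ _) = u := c.getLast_support
    rw [List.getLast_congr _ (List.cons_ne_nil _ _) h1] at hg
    rwa [List.getLast_cons htne] at hg
  have hnd : c.support.dropLast.Nodup := by
    have h2 : c.support.dropLast = u :: c.support.tail.dropLast := by
      conv_lhs => rw [h1]
      exact List.dropLast_cons_of_ne_nil htne
    rw [h2]
    have h3 : c.support.tail = c.support.tail.dropLast ++ [u] := by
      conv_lhs => rw [← List.dropLast_append_getLast htne, hlast]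
    rw [h3] at htnd
    have h4 := List.nodup_append'.mp htnd
    refine List.nodup_cons.mpr ⟨fun hu => h4.2.2 hu (by simp), h4.1⟩
  have hc1 : (c.darts.map (·.fst)).count v ≤ 1 := by
    rw [c.map_fst_darts]
    exact List.nodup_iff_count_le_one.mp hnd v
  have hc2 : (c.darts.map (·.snd)).count v ≤ 1 := by
    rw [c.map_snd_darts]
    exact List.nodup_iff_count_le_one.mp htnd v
  omega


private lemma reach_step' {G : SimpleGraph V} {S : Set V} {u v : V} (hu : u ∈ Sᶜ) (hv : v ∈ Sᶜ)
    (h : G.Adj u v) : (G.induce Sᶜ).Reachable ⟨u, hu⟩ ⟨v, hv⟩ :=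
  SimpleGraph.Adj.reachable (by simp [h])

private lemma compCount_le' [DecidableEq V] {G : SimpleGraph V} (S : Set V) (T : Finset V)
    (hT : ∀ v (hv : v ∈ Sᶜ), ∃ t, ∃ (ht : t ∈ Sᶜ), t ∈ T ∧
      (G.induce Sᶜ).Reachable ⟨v, hv⟩ ⟨t, ht⟩) :
    compCount G S ≤ T.card := by
  classical
  by_cases hne : Nonempty ((G.induce Sᶜ).ConnectedComponent)
  · obtain ⟨C₀⟩ := hne
    have hsurj : Function.Surjective (fun t : {t // t ∈ T} =>
        if h : (t : V) ∈ Sᶜ then (G.induce Sᶜ).connectedComponentMk ⟨t, h⟩ else C₀) := by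
      intro C
      obtain ⟨⟨v, hv⟩, rfl⟩ := C.exists_rep
      obtain ⟨t, ht, htT, hre⟩ := hT v hv
      refine ⟨⟨t, htT⟩, ?_⟩
      simp only [ht, dif_pos]
      exact ConnectedComponent.sound hre.symm
    calc compCount G S ≤ Nat.card {t // t ∈ T} :=
          Nat.card_le_card_of_surjective _ hsurj
      _ = T.card := by simp [Nat.card_eq_fintype_card]
  · rw [not_nonempty_iff] at hne
    rw [compCount, Nat.card_of_isEmpty]
    omega

private lemma compCount_eq_two [DecidableEq V] {G : SimpleGraph V} (S : Set V) (v₁ v₂ : V)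
    (h1 : v₁ ∈ Sᶜ) (h2 : v₂ ∈ Sᶜ)
    (hnr : ¬ (G.induce Sᶜ).Reachable ⟨v₁, h1⟩ ⟨v₂, h2⟩)
    (hcov : ∀ v (hv : v ∈ Sᶜ), (G.induce Sᶜ).Reachable ⟨v, hv⟩ ⟨v₁, h1⟩ ∨
      (G.induce Sᶜ).Reachable ⟨v, hv⟩ ⟨v₂, h2⟩) :
    compCount G S = 2 := by
  rw [compCount, Nat.card_eq_two_iff]
  refine ⟨(G.induce Sᶜ).connectedComponentMk ⟨v₁, h1⟩,
    (G.induce Sᶜ).connectedComponentMk ⟨v₂, h2⟩,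
    fun h => hnr (ConnectedComponent.exact h), ?_⟩
  apply Set.eq_univ_of_forall
  intro C
  obtain ⟨⟨v, hv⟩, rfl⟩ := C.exists_rep
  rcases hcov v hv with h | h
  · exact Or.inl (ConnectedComponent.sound h)
  · exact Or.inr (ConnectedComponent.sound h)


private lemma aux_nodom [DecidableEq V] (G : SimpleGraph V)
    (x : V) (y a b : Fin 3 → V)
    (hya : ∀ i j, y i ≠ a j) (hyb : ∀ i j, y i ≠ b j)
    (haa : ∀ i j, i ≠ j → a i ≠ a j) (hbb : ∀ i j, i ≠ j → b i ≠ b j)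
    (hab : ∀ i j, a i ≠ b j)
    (hyy : ∀ i j, i ≠ j → y i ≠ y j)
    (habE : ∀ i, G.Adj (a i) (b i))
    (hnbrA : ∀ i v, G.Adj (a i) v → v = x ∨ v = y i ∨ v = b i)
    (hnbrB : ∀ i v, G.Adj (b i) v → v = x ∨ v = y i ∨ v = a i) :
    ∀ (u : V) (c : G.Walk u u), c.IsCycle → ¬ IsDominating c := by
  intro u c hc hdom
  have hinner : ∀ i : Fin 3, a i ∈ c.support ∨ b i ∈ c.support := fun i =>
    hdom (a i) (b i) (habE i)
  have claim : ∀ i : Fin 3, ∃ w, (w = y i ∨ w = a i ∨ w = b i) ∧ s(x, w) ∈ c.edges := by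
    intro i
    by_contra hno
    push_neg at hno
    have SC : ∀ A B : V, ((A = a i ∧ B = b i) ∨ (A = b i ∧ B = a i)) → A ∈ c.support →
        s(A, y i) ∈ c.edges ∧ s(A, B) ∈ c.edges := by
      intro A B hAB hA
      obtain ⟨p, q, hpq, hp, hq⟩ := cycle_two_nbrs hc hA
      have hmemP : ∀ w, s(A, w) ∈ c.edges → w = y i ∨ w = B := by
        intro w hw
        have hadj : G.Adj A w := Walk.adj_of_mem_edges c hw
        have hAnx : s(x, A) ∉ c.edges := by
          apply hno A
          rcases hAB with ⟨rfl, _⟩ | ⟨rfl, _⟩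
          · exact Or.inr (Or.inl rfl)
          · exact Or.inr (Or.inr rfl)
        have hw3 : w = x ∨ w = y i ∨ w = B := by
          rcases hAB with ⟨rfl, rfl⟩ | ⟨rfl, rfl⟩
          · exact hnbrA i w hadj
          · rcases hnbrB i w hadj with h | h | h
            · exact Or.inl h
            · exact Or.inr (Or.inl h)
            · exact Or.inr (Or.inr h)
        rcases hw3 with rfl | h | h
        · exact absurd (by rwa [Sym2.eq_swap] at hw) hAnx
        · exact Or.inl h
        · exact Or.inr h
      rcases hmemP p hp with rfl | rfl <;> rcases hmemP q hq with rfl | rfl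
      · exact absurd rfl hpq
      · exact ⟨hp, hq⟩
      · exact ⟨hq, hp⟩
      · exact absurd rfl hpq
    obtain ⟨A, B, hABspec, hA⟩ : ∃ A B, ((A = a i ∧ B = b i) ∨ (A = b i ∧ B = a i)) ∧
        A ∈ c.support := by
      rcases hinner i with h | h
      · exact ⟨a i, b i, Or.inl ⟨rfl, rfl⟩, h⟩
      · exact ⟨b i, a i, Or.inr ⟨rfl, rfl⟩, h⟩
    obtain ⟨hAy, hABe⟩ := SC A B hABspec hA
    have hB : B ∈ c.support := Walk.snd_mem_support_of_mem_edges c hABe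
    obtain ⟨hBy, _⟩ := SC B A (by tauto) hB
    -- normalize the three edges
    have hay' : s(y i, a i) ∈ c.edges := by
      rcases hABspec with ⟨rfl, rfl⟩ | ⟨rfl, rfl⟩
      · rwa [Sym2.eq_swap] at hAy
      · rwa [Sym2.eq_swap] at hBy
    have hby' : s(y i, b i) ∈ c.edges := by
      rcases hABspec with ⟨rfl, rfl⟩ | ⟨rfl, rfl⟩
      · rwa [Sym2.eq_swap] at hBy
      · rwa [Sym2.eq_swap] at hAy
    have hab' : s(a i, b i) ∈ c.edges := by
      rcases hABspec with ⟨rfl, rfl⟩ | ⟨rfl, rfl⟩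
      · exact hABe
      · rwa [Sym2.eq_swap] at hABe
    -- closure set
    set K : Set V := {v | v = y i ∨ v = a i ∨ v = b i} with hKdef
    have hclosed : ∀ p q : ↥c.toSubgraph.verts, c.toSubgraph.coe.Adj p q →
        (p : V) ∈ K → (q : V) ∈ K := by
      rintro ⟨p, hpv⟩ ⟨q, hqv⟩ hadj hpK
      have hedge : s(p, q) ∈ c.edges := by
        rw [← Walk.mem_edges_toSubgraph]
        rw [Subgraph.coe_adj] at hadj
        exact Subgraph.mem_edgeSet.mpr hadj
      have hGadj : G.Adj p q := Walk.adj_of_mem_edges c hedge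
      rcases hpK with rfl | rfl | rfl
      · -- p = y i
        by_cases h1 : q = a i
        · exact Or.inr (Or.inl h1)
        by_cases h2 : q = b i
        · exact Or.inr (Or.inr h2)
        · exact absurd hedge (fun he => cycle_edges_at_most_two hc
            (hab i i) (fun hh : a i = q => h1 hh.symm) (fun hh : b i = q => h2 hh.symm)
            hay' hby' he)
      · -- p = a i
        rcases hnbrA i q hGadj with rfl | h | h
        · exact absurd (by rwa [Sym2.eq_swap] at hedge) (hno (a i) (Or.inr (Or.inl rfl)))
        · exact Or.inl h
        · exact Or.inr (Or.inr h)
      · -- p = b i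
        rcases hnbrB i q hGadj with rfl | h | h
        · exact absurd (by rwa [Sym2.eq_swap] at hedge) (hno (b i) (Or.inr (Or.inr rfl)))
        · exact Or.inl h
        · exact Or.inr (Or.inl h)
    -- pick another piece
    set j : Fin 3 := if i = 0 then 1 else 0 with hjdef
    have hij : i ≠ j := by
      rw [hjdef]
      by_cases h : i = 0
      · subst h; decide
      · simpa [h] using h
    obtain ⟨wj, hwj_mem, hwj_sup⟩ : ∃ wj, (wj = a j ∨ wj = b j) ∧ wj ∈ c.support := by
      rcases hinner j with h | h
      · exact ⟨a j, Or.inl rfl, h⟩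
      · exact ⟨b j, Or.inr rfl, h⟩
    have hAv : A ∈ c.toSubgraph.verts := (Walk.mem_verts_toSubgraph c).mpr hA
    have hwv : wj ∈ c.toSubgraph.verts := (Walk.mem_verts_toSubgraph c).mpr hwj_sup
    have hreach := (c.toSubgraph_connected) ⟨A, hAv⟩ ⟨wj, hwv⟩
    have hAK : (A : V) ∈ K := by
      rcases hABspec with ⟨rfl, _⟩ | ⟨rfl, _⟩
      · exact Or.inr (Or.inl rfl)
      · exact Or.inr (Or.inr rfl)
    have hwK : wj ∈ K :=
      reachable_closed (G' := c.toSubgraph.coe)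
        {p : ↥c.toSubgraph.verts | (p : V) ∈ K} hclosed hreach hAK
    rcases hwK with h | h | h <;> rcases hwj_mem with h2 | h2 <;> rw [h2] at h
    · exact hya i j h.symm
    · exact hyb i j h.symm
    · exact haa i j hij h.symm
    · exact hab i j h.symm
    · exact hab j i h
    · exact hbb i j hij h.symm
  -- final contradiction
  choose w hwmem hwe using claim
  have hwne : ∀ i j : Fin 3, i ≠ j → w i ≠ w j := by
    intro i j hij
    rcases hwmem i with h1 | h1 | h1 <;> rcases hwmem j with h2 | h2 | h2 <;>
      rw [h1, h2] <;>
      first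
        | exact hyy i j hij
        | exact hya i j
        | exact hyb i j
        | exact (hya j i).symm
        | exact (hyb j i).symm
        | exact haa i j hij
        | exact hab i j
        | exact (hab j i).symm
        | exact hbb i j hij
  exact cycle_edges_at_most_two hc (hwne 0 1 (by decide)) (hwne 0 2 (by decide))
    (hwne 1 2 (by decide)) (hwe 0) (hwe 1) (hwe 2)


private lemma aux_conn [DecidableEq V] (G : SimpleGraph V)
    (x z : V) (y a b : Fin 3 → V)
    (hxz : x ≠ z)
    (hxy : ∀ i, x ≠ y i) (hxa : ∀ i, x ≠ a i) (hxb : ∀ i, x ≠ b i)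
    (hyy : ∀ i j, i ≠ j → y i ≠ y j)
    (hab : ∀ i j, a i ≠ b j)
    (huniv : ∀ v : V, v = x ∨ v = z ∨ ∃ i, v = y i ∨ v = a i ∨ v = b i)
    (hax : ∀ i, G.Adj (a i) x) (hbx : ∀ i, G.Adj (b i) x)
    (hay : ∀ i, G.Adj (a i) (y i)) (hby : ∀ i, G.Adj (b i) (y i))
    (hzyE : ∀ i, G.Adj z (y i)) :
    ∀ S : Finset V, S.card ≤ 1 → (G.induce (↑S : Set V)ᶜ).Connected := by
  intro S hS
  have hone : ∀ u v : V, u ∈ S → v ∈ S → u = v := fun u v hu hv =>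
    Finset.card_le_one.mp hS u hu v hv
  have hcm : ∀ v : V, v ∉ S → v ∈ (↑S : Set V)ᶜ := by
    intro v hv
    simpa using hv
  rw [connected_iff_exists_forall_reachable]
  by_cases hxS : x ∈ S
  · -- S = {x}; hub z
    have hmem : ∀ v : V, v ≠ x → v ∈ (↑S : Set V)ᶜ := fun v hvx =>
      hcm v (fun hv => hvx (hone v x hv hxS))
    have hz : z ∈ (↑S : Set V)ᶜ := hmem z (Ne.symm hxz)
    refine ⟨⟨z, hz⟩, ?_⟩
    rintro ⟨v, hv⟩
    have hvx : v ≠ x := by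
      rintro rfl
      exact hv (by simpa using hxS)
    rcases huniv v with rfl | rfl | ⟨i, rfl | rfl | rfl⟩
    · exact absurd rfl hvx
    · exact Reachable.refl _
    · exact reach_step' hz hv (hzyE i)
    · exact (reach_step' hz (hmem (y i) (Ne.symm (hxy i))) (hzyE i)).trans
        (reach_step' (hmem (y i) (Ne.symm (hxy i))) hv (hay i).symm)
    · exact (reach_step' hz (hmem (y i) (Ne.symm (hxy i))) (hzyE i)).trans
        (reach_step' (hmem (y i) (Ne.symm (hxy i))) hv (hby i).symm)
  · -- hub x
    have hx : x ∈ (↑S : Set V)ᶜ := hcm x hxS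
    have hyreach : ∀ j (hyj : y j ∈ (↑S : Set V)ᶜ),
        (G.induce (↑S : Set V)ᶜ).Reachable ⟨y j, hyj⟩ ⟨x, hx⟩ := by
      intro j hyj
      by_cases haj : a j ∈ S
      · have hbj : b j ∈ (↑S : Set V)ᶜ := hcm _ (fun hb => hab j j (hone _ _ haj hb))
        exact (reach_step' hyj hbj (hby j).symm).trans (reach_step' hbj hx (hbx j))
      · have haj' : a j ∈ (↑S : Set V)ᶜ := hcm _ haj
        exact (reach_step' hyj haj' (hay j).symm).trans (reach_step' haj' hx (hax j))
    refine ⟨⟨x, hx⟩, ?_⟩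
    rintro ⟨v, hv⟩
    rcases huniv v with rfl | rfl | ⟨i, rfl | rfl | rfl⟩
    · exact Reachable.refl _
    · -- z: pick j with y j ∉ S
      obtain ⟨j, hyj⟩ : ∃ j, y j ∈ (↑S : Set V)ᶜ := by
        by_cases h0 : y 0 ∈ S
        · exact ⟨1, hcm _ (fun h1 => hyy 0 1 (by decide) (hone _ _ h0 h1))⟩
        · exact ⟨0, hcm _ h0⟩
      exact ((reach_step' hv hyj (hzyE j)).trans (hyreach j hyj)).symm
    · exact (hyreach i hv).symm
    · exact (reach_step' hv hx (hax i)).symm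
    · exact (reach_step' hv hx (hbx i)).symm


private lemma aux_cut [DecidableEq V] (G : SimpleGraph V)
    (x z : V) (y a b : Fin 3 → V)
    (hxz : x ≠ z)
    (hxy : ∀ i, x ≠ y i) (hxa : ∀ i, x ≠ a i) (hxb : ∀ i, x ≠ b i)
    (hzy : ∀ i, z ≠ y i) (hza : ∀ i, z ≠ a i) (hzb : ∀ i, z ≠ b i)
    (hyy : ∀ i j, i ≠ j → y i ≠ y j)
    (hya : ∀ i j, y i ≠ a j) (hyb : ∀ i j, y i ≠ b j)
    (hab : ∀ i j, a i ≠ b j)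
    (huniv : ∀ v : V, v = x ∨ v = z ∨ ∃ i, v = y i ∨ v = a i ∨ v = b i)
    (hay : ∀ i, G.Adj (a i) (y i)) (hby : ∀ i, G.Adj (b i) (y i))
    (habE : ∀ i, G.Adj (a i) (b i))
    (hzyE : ∀ i, G.Adj z (y i))
    (hnbrA : ∀ v, G.Adj (a 0) v → v = x ∨ v = y 0 ∨ v = b 0)
    (hnbrB : ∀ v, G.Adj (b 0) v → v = x ∨ v = y 0 ∨ v = a 0) :
    ∃ ha0 : a 0 ∈ (↑({x, y 0} : Finset V) : Set V)ᶜ, ∃ hz0 : z ∈ (↑({x, y 0} : Finset V) : Set V)ᶜ,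
      ¬ (G.induce (↑({x, y 0} : Finset V) : Set V)ᶜ).Reachable ⟨a 0, ha0⟩ ⟨z, hz0⟩ ∧
      (∀ v (hv : v ∈ (↑({x, y 0} : Finset V) : Set V)ᶜ),
        (G.induce (↑({x, y 0} : Finset V) : Set V)ᶜ).Reachable ⟨v, hv⟩ ⟨a 0, ha0⟩ ∨
        (G.induce (↑({x, y 0} : Finset V) : Set V)ᶜ).Reachable ⟨v, hv⟩ ⟨z, hz0⟩) := by
  set S : Finset V := {x, y 0} with hSdef
  have hmm : ∀ v : V, v ≠ x → v ≠ y 0 → v ∈ (↑S : Set V)ᶜ := by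
    intro v h1 h2
    simp [hSdef, h1, h2]
  have ha0 : a 0 ∈ (↑S : Set V)ᶜ := hmm _ (Ne.symm (hxa 0)) (Ne.symm (hya 0 0))
  have hb0 : b 0 ∈ (↑S : Set V)ᶜ := hmm _ (Ne.symm (hxb 0)) (Ne.symm (hyb 0 0))
  have hz0 : z ∈ (↑S : Set V)ᶜ := hmm _ (Ne.symm hxz) (hzy 0)
  refine ⟨ha0, hz0, ?_, ?_⟩
  · -- not reachable
    intro hre
    have hK : ∀ p q : ↥(↑S : Set V)ᶜ, (G.induce (↑S : Set V)ᶜ).Adj p q →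
        ((p : V) = a 0 ∨ (p : V) = b 0) → ((q : V) = a 0 ∨ (q : V) = b 0) := by
      rintro ⟨p, hp⟩ ⟨q, hq⟩ hadj hpK
      have hGadj : G.Adj p q := hadj
      simp only at hpK ⊢
      have hqS : q ≠ x ∧ q ≠ y 0 := by
        constructor <;> (rintro rfl; revert hq; simp [hSdef])
      rcases hpK with rfl | rfl
      · rcases hnbrA q hGadj with rfl | rfl | rfl
        · exact absurd rfl hqS.1
        · exact absurd rfl hqS.2
        · exact Or.inr rfl
      · rcases hnbrB q hGadj with rfl | rfl | rfl
        · exact absurd rfl hqS.1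
        · exact absurd rfl hqS.2
        · exact Or.inl rfl
    have := reachable_closed {p : ↥(↑S : Set V)ᶜ | (p : V) = a 0 ∨ (p : V) = b 0}
      hK hre (Or.inl rfl)
    rcases this with h | h
    · exact hza 0 (show z = a 0 from h).symm.symm
    · exact hzb 0 (show z = b 0 from h).symm.symm
  · -- coverage
    intro v hv
    have hyi : ∀ i : Fin 3, i ≠ 0 → y i ∈ (↑S : Set V)ᶜ := fun i hi =>
      hmm _ (Ne.symm (hxy i)) (hyy i 0 hi)
    rcases huniv v with rfl | rfl | ⟨i, rfl | rfl | rfl⟩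
    · exact absurd hv (by simp [hSdef])
    · exact Or.inr (Reachable.refl _)
    · by_cases hi : i = 0
      · subst hi; exact absurd hv (by simp [hSdef])
      · exact Or.inr (reach_step' hv hz0 (hzyE i).symm)
    · by_cases hi : i = 0
      · subst hi; exact Or.inl (Reachable.refl _)
      · exact Or.inr ((reach_step' hv (hyi i hi) (hay i)).trans
          (reach_step' (hyi i hi) hz0 (hzyE i).symm))
    · by_cases hi : i = 0
      · subst hi; exact Or.inl (reach_step' hv ha0 (habE 0).symm)
      · exact Or.inr ((reach_step' hv (hyi i hi) (hby i)).trans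
          (reach_step' (hyi i hi) hz0 (hzyE i).symm))


private lemma aux_tough [DecidableEq V] (G : SimpleGraph V)
    (x z : V) (y a b : Fin 3 → V)
    (hxz : x ≠ z)
    (hxy : ∀ i, x ≠ y i) (hxa : ∀ i, x ≠ a i) (hxb : ∀ i, x ≠ b i)
    (hzy : ∀ i, z ≠ y i) (hza : ∀ i, z ≠ a i) (hzb : ∀ i, z ≠ b i)
    (hyy : ∀ i j, i ≠ j → y i ≠ y j)
    (hya : ∀ i j, y i ≠ a j) (hyb : ∀ i j, y i ≠ b j)
    (haa : ∀ i j, i ≠ j → a i ≠ a j) (hbb : ∀ i j, i ≠ j → b i ≠ b j)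
    (hab : ∀ i j, a i ≠ b j)
    (huniv : ∀ v : V, v = x ∨ v = z ∨ ∃ i, v = y i ∨ v = a i ∨ v = b i)
    (hax : ∀ i, G.Adj (a i) x) (hbx : ∀ i, G.Adj (b i) x)
    (hay : ∀ i, G.Adj (a i) (y i)) (hby : ∀ i, G.Adj (b i) (y i))
    (habE : ∀ i, G.Adj (a i) (b i))
    (hzyE : ∀ i, G.Adj z (y i))
    (hy01 : G.Adj (y 0) (y 1)) :
    ∀ S : Finset V, 1 < compCount G ↑S → compCount G ↑S ≤ S.card := by
  intro S hS1
  have hcm : ∀ v : V, v ∉ S → v ∈ (↑S : Set V)ᶜ := fun v hv => by simpa using hv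
  have hcm' : ∀ v : V, v ∈ (↑S : Set V)ᶜ → v ∉ S := fun v hv => by simpa using hv
  by_cases hxS : x ∈ S
  · -- CASE x ∈ S
    classical
    set p : Fin 3 → Finset V := fun i =>
      if y i ∉ S then {y i} else if a i ∉ S then {a i} else if b i ∉ S then {b i} else ∅
      with hpdef
    have hpS : ∀ i t, t ∈ p i → t ∉ S := by
      intro i t ht
      simp only [hpdef] at ht
      split_ifs at ht with h1 h2 h3 <;> simp_all
    have hpcard : ∀ i, (p i).card ≤ 1 := by
      intro i
      simp only [hpdef]
      split_ifs <;> simp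
    have hpcov : ∀ (i : Fin 3) (v : V), (v = y i ∨ v = a i ∨ v = b i) →
        ∀ hv : v ∈ (↑S : Set V)ᶜ, ∃ t, ∃ ht : t ∈ (↑S : Set V)ᶜ, t ∈ p i ∧
        (G.induce (↑S : Set V)ᶜ).Reachable ⟨v, hv⟩ ⟨t, ht⟩ := by
      intro i v hvmem hv
      by_cases hyiS : y i ∈ S
      · by_cases haiS : a i ∈ S
        · by_cases hbiS : b i ∈ S
          · exfalso
            rcases hvmem with rfl | rfl | rfl <;> exact hcm' _ hv (by assumption)
          · refine ⟨b i, hcm _ hbiS, by simp [hpdef, hyiS, haiS, hbiS], ?_⟩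
            rcases hvmem with rfl | rfl | rfl
            · exact absurd hyiS (hcm' _ hv)
            · exact absurd haiS (hcm' _ hv)
            · exact Reachable.refl _
        · refine ⟨a i, hcm _ haiS, by simp [hpdef, hyiS, haiS], ?_⟩
          rcases hvmem with rfl | rfl | rfl
          · exact absurd hyiS (hcm' _ hv)
          · exact Reachable.refl _
          · exact reach_step' hv (hcm _ haiS) (habE i).symm
      · refine ⟨y i, hcm _ hyiS, by simp [hpdef, hyiS], ?_⟩
        rcases hvmem with rfl | rfl | rfl
        · exact Reachable.refl _
        · exact reach_step' hv (hcm _ hyiS) (hay i)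
        · exact reach_step' hv (hcm _ hyiS) (hby i)
    by_cases hzS : z ∈ S
    · by_cases h01 : y 0 ∉ S ∧ y 1 ∉ S
      · -- T = insert (y 0) (p 2)
        have hy0 : y 0 ∈ (↑S : Set V)ᶜ := hcm _ h01.1
        have hcov : ∀ v (hv : v ∈ (↑S : Set V)ᶜ), ∃ t, ∃ ht : t ∈ (↑S : Set V)ᶜ,
            t ∈ insert (y 0) (p 2) ∧
            (G.induce (↑S : Set V)ᶜ).Reachable ⟨v, hv⟩ ⟨t, ht⟩ := by
          intro v hv
          rcases huniv v with rfl | rfl | ⟨i, hvmem⟩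
          · exact absurd hxS (hcm' _ hv)
          · exact absurd hzS (hcm' _ hv)
          · have hp0 : p 0 = {y 0} := by simp only [hpdef]; rw [if_pos h01.1]
            have hp1 : p 1 = {y 1} := by simp only [hpdef]; rw [if_pos h01.2]
            fin_cases i
            · obtain ⟨t, ht, htp, hre⟩ := hpcov 0 v hvmem hv
              rw [hp0, Finset.mem_singleton] at htp
              subst htp
              exact ⟨y 0, hy0, Finset.mem_insert_self _ _, hre⟩
            · obtain ⟨t, ht, htp, hre⟩ := hpcov 1 v hvmem hv
              rw [hp1, Finset.mem_singleton] at htp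
              subst htp
              exact ⟨y 0, hy0, Finset.mem_insert_self _ _,
                hre.trans (reach_step' ht hy0 hy01.symm)⟩
            · obtain ⟨t, ht, htp, hre⟩ := hpcov 2 v hvmem hv
              exact ⟨t, ht, Finset.mem_insert_of_mem htp, hre⟩
        calc compCount G ↑S ≤ (insert (y 0) (p 2)).card := compCount_le' _ _ hcov
          _ ≤ 2 := le_trans (Finset.card_insert_le _ _) (by have := hpcard 2; omega)
          _ ≤ S.card := by
              have : ({x, z} : Finset V) ⊆ S := by
                intro t ht
                rcases Finset.mem_insert.mp ht with rfl | ht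
                · exact hxS
                · rw [Finset.mem_singleton.mp ht]; exact hzS
              calc 2 = ({x, z} : Finset V).card := by
                    rw [Finset.card_insert_of_notMem (by simp [hxz]), Finset.card_singleton]
                _ ≤ S.card := Finset.card_le_card this
      · -- y 0 ∈ S or y 1 ∈ S ; T = p 0 ∪ p 1 ∪ p 2
        have hsubT : ∀ i : Fin 3, p i ⊆ p 0 ∪ p 1 ∪ p 2 := by
          intro i
          fin_cases i
          · exact fun t ht => Finset.mem_union_left _ (Finset.mem_union_left _ ht)
          · exact fun t ht => Finset.mem_union_left _ (Finset.mem_union_right _ ht)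
          · exact fun t ht => Finset.mem_union_right _ ht
        have hcov : ∀ v (hv : v ∈ (↑S : Set V)ᶜ), ∃ t, ∃ ht : t ∈ (↑S : Set V)ᶜ,
            t ∈ p 0 ∪ p 1 ∪ p 2 ∧
            (G.induce (↑S : Set V)ᶜ).Reachable ⟨v, hv⟩ ⟨t, ht⟩ := by
          intro v hv
          rcases huniv v with rfl | rfl | ⟨i, hvmem⟩
          · exact absurd hxS (hcm' _ hv)
          · exact absurd hzS (hcm' _ hv)
          · obtain ⟨t, ht, htp, hre⟩ := hpcov i v hvmem hv
            exact ⟨t, ht, hsubT i htp, hre⟩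
        have hyk : ∃ k : Fin 3, y k ∈ S := by
          rcases not_and_or.mp h01 with h | h
          · exact ⟨0, not_not.mp h⟩
          · exact ⟨1, not_not.mp h⟩
        obtain ⟨k, hk⟩ := hyk
        calc compCount G ↑S ≤ (p 0 ∪ p 1 ∪ p 2).card := compCount_le' _ _ hcov
          _ ≤ 3 := by
              have h1 := Finset.card_union_le (p 0 ∪ p 1) (p 2)
              have h2 := Finset.card_union_le (p 0) (p 1)
              have := hpcard 0; have := hpcard 1; have := hpcard 2
              omega
          _ ≤ S.card := by
              have hsub : ({x, z, y k} : Finset V) ⊆ S := by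
                intro t ht
                rcases Finset.mem_insert.mp ht with rfl | ht
                · exact hxS
                rcases Finset.mem_insert.mp ht with rfl | ht
                · exact hzS
                rw [Finset.mem_singleton.mp ht]; exact hk
              have hcard : ({x, z, y k} : Finset V).card = 3 := by
                rw [Finset.card_insert_of_notMem (by simp [hxz, hxy k]),
                  Finset.card_insert_of_notMem (by simp [hzy k]), Finset.card_singleton]
              rw [← hcard]
              exact Finset.card_le_card hsub
    · -- z ∉ S
      have hz : z ∈ (↑S : Set V)ᶜ := hcm _ hzS
      by_cases hyex : ∃ j : Fin 3, y j ∉ S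
      · obtain ⟨j, hyjS⟩ := hyex
        have hyj : y j ∈ (↑S : Set V)ᶜ := hcm _ hyjS
        set Q : Finset (Fin 3) := univ.filter (fun i => y i ∈ S) with hQdef
        have hcov : ∀ v (hv : v ∈ (↑S : Set V)ᶜ), ∃ t, ∃ ht : t ∈ (↑S : Set V)ᶜ,
            t ∈ insert (y j) (Q.biUnion p) ∧
            (G.induce (↑S : Set V)ᶜ).Reachable ⟨v, hv⟩ ⟨t, ht⟩ := by
          intro v hv
          rcases huniv v with rfl | rfl | ⟨i, hvmem⟩
          · exact absurd hxS (hcm' _ hv)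
          · exact ⟨y j, hyj, Finset.mem_insert_self _ _, reach_step' hv hyj (hzyE j)⟩
          · by_cases hyiS : y i ∈ S
            · obtain ⟨t, ht, htp, hre⟩ := hpcov i v hvmem hv
              refine ⟨t, ht, Finset.mem_insert_of_mem (Finset.mem_biUnion.mpr
                ⟨i, by simp [hQdef, hyiS], htp⟩), hre⟩
            · obtain ⟨t, ht, htp, hre⟩ := hpcov i v hvmem hv
              have hpi : p i = {y i} := by simp only [hpdef]; rw [if_pos hyiS]
              rw [hpi, Finset.mem_singleton] at htp
              subst htp
              exact ⟨y j, hyj, Finset.mem_insert_self _ _,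
                (hre.trans (reach_step' ht hz (hzyE i).symm)).trans
                  (reach_step' hz hyj (hzyE j))⟩
        have hUsub : insert x (Q.image y) ⊆ S := by
          intro t ht
          rcases Finset.mem_insert.mp ht with rfl | ht
          · exact hxS
          · obtain ⟨i, hiQ, rfl⟩ := Finset.mem_image.mp ht
            exact (Finset.mem_filter.mp hiQ).2
        have hUcard : (insert x (Q.image y)).card = 1 + Q.card := by
          rw [Finset.card_insert_of_notMem (by
            intro hmem
            obtain ⟨i, _, hxi⟩ := Finset.mem_image.mp hmem
            exact hxy i hxi.symm)]
          rw [Finset.card_image_of_injOn (fun i _ j _ hij => by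
            by_contra hne
            exact hyy i j hne hij)]
          omega
        calc compCount G ↑S ≤ (insert (y j) (Q.biUnion p)).card := compCount_le' _ _ hcov
          _ ≤ 1 + Q.card := by
              have h1 := Finset.card_insert_le (y j) (Q.biUnion p)
              have h2 := Finset.card_biUnion_le (s := Q) (t := p)
              have h3 : ∑ i ∈ Q, (p i).card ≤ Q.card := by
                calc ∑ i ∈ Q, (p i).card ≤ ∑ _i ∈ Q, 1 :=
                      Finset.sum_le_sum (fun i _ => hpcard i)
                  _ = Q.card := by simp
              omega
          _ = (insert x (Q.image y)).card := hUcard.symm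
          _ ≤ S.card := Finset.card_le_card hUsub
      · -- all y ∈ S
        push_neg at hyex
        have hsubT : ∀ i : Fin 3, p i ⊆ p 0 ∪ p 1 ∪ p 2 := by
          intro i
          fin_cases i
          · exact fun t ht => Finset.mem_union_left _ (Finset.mem_union_left _ ht)
          · exact fun t ht => Finset.mem_union_left _ (Finset.mem_union_right _ ht)
          · exact fun t ht => Finset.mem_union_right _ ht
        have hcov : ∀ v (hv : v ∈ (↑S : Set V)ᶜ), ∃ t, ∃ ht : t ∈ (↑S : Set V)ᶜ,
            t ∈ insert z (p 0 ∪ p 1 ∪ p 2) ∧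
            (G.induce (↑S : Set V)ᶜ).Reachable ⟨v, hv⟩ ⟨t, ht⟩ := by
          intro v hv
          rcases huniv v with rfl | rfl | ⟨i, hvmem⟩
          · exact absurd hxS (hcm' _ hv)
          · exact ⟨_, hv, Finset.mem_insert_self _ _, Reachable.refl _⟩
          · obtain ⟨t, ht, htp, hre⟩ := hpcov i v hvmem hv
            exact ⟨t, ht, Finset.mem_insert_of_mem (hsubT i htp), hre⟩
        have hUsub : ({x, y 0, y 1, y 2} : Finset V) ⊆ S := by
          intro t ht
          rcases Finset.mem_insert.mp ht with rfl | ht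
          · exact hxS
          rcases Finset.mem_insert.mp ht with rfl | ht
          · exact hyex 0
          rcases Finset.mem_insert.mp ht with rfl | ht
          · exact hyex 1
          rw [Finset.mem_singleton.mp ht]; exact hyex 2
        have hUcard : ({x, y 0, y 1, y 2} : Finset V).card = 4 := by
          rw [Finset.card_insert_of_notMem (by simp [hxy 0, hxy 1, hxy 2]),
            Finset.card_insert_of_notMem (by simp [hyy 0 1 (by decide), hyy 0 2 (by decide)]),
            Finset.card_insert_of_notMem (by simp [hyy 1 2 (by decide)]),
            Finset.card_singleton]
        calc compCount G ↑S ≤ (insert z (p 0 ∪ p 1 ∪ p 2)).card := compCount_le' _ _ hcov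
          _ ≤ 4 := by
              have h0 := Finset.card_insert_le z (p 0 ∪ p 1 ∪ p 2)
              have h1 := Finset.card_union_le (p 0 ∪ p 1) (p 2)
              have h2 := Finset.card_union_le (p 0) (p 1)
              have := hpcard 0; have := hpcard 1; have := hpcard 2
              omega
          _ = ({x, y 0, y 1, y 2} : Finset V).card := hUcard.symm
          _ ≤ S.card := Finset.card_le_card hUsub
  · -- CASE x ∉ S
    have hx : x ∈ (↑S : Set V)ᶜ := hcm x hxS
    have hinx : ∀ (i : Fin 3) (v : V), (v = a i ∨ v = b i) → ∀ hv : v ∈ (↑S : Set V)ᶜ,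
        (G.induce (↑S : Set V)ᶜ).Reachable ⟨v, hv⟩ ⟨x, hx⟩ := by
      rintro i v (rfl | rfl) hv
      · exact reach_step' hv hx (hax i)
      · exact reach_step' hv hx (hbx i)
    have hyx : ∀ (i : Fin 3) (hyi : y i ∈ (↑S : Set V)ᶜ), (a i ∉ S ∨ b i ∉ S) →
        (G.induce (↑S : Set V)ᶜ).Reachable ⟨y i, hyi⟩ ⟨x, hx⟩ := by
      rintro i hyi (h | h)
      · exact (reach_step' hyi (hcm _ h) (hay i).symm).trans (reach_step' (hcm _ h) hx (hax i))
      · exact (reach_step' hyi (hcm _ h) (hby i).symm).trans (reach_step' (hcm _ h) hx (hbx i))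
    classical
    set F : Finset (Fin 3) := univ.filter (fun i => y i ∉ S ∧ a i ∈ S ∧ b i ∈ S) with hFdef
    set Y : Finset V := F.image y with hYdef
    have hYcard : Y.card ≤ F.card := Finset.card_image_le
    have hyanchor : ∀ i : Fin 3, i ∈ F → y i ∈ Y := fun i hi => Finset.mem_image_of_mem y hi
    have hmemF : ∀ i : Fin 3, y i ∉ S → a i ∈ S → b i ∈ S → i ∈ F := by
      intro i h1 h2 h3
      rw [hFdef, Finset.mem_filter]
      exact ⟨Finset.mem_univ _, h1, h2, h3⟩
    have hFab : ∀ i : Fin 3, i ∈ F → a i ∈ S ∧ b i ∈ S := by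
      intro i hi
      rw [hFdef, Finset.mem_filter] at hi
      exact hi.2.2
    by_cases hgood : ∃ i : Fin 3, y i ∉ S ∧ (a i ∉ S ∨ b i ∉ S)
    · obtain ⟨g, hgy, hgin⟩ := hgood
      have hcov : ∀ v (hv : v ∈ (↑S : Set V)ᶜ), ∃ t, ∃ ht : t ∈ (↑S : Set V)ᶜ,
          t ∈ insert x Y ∧ (G.induce (↑S : Set V)ᶜ).Reachable ⟨v, hv⟩ ⟨t, ht⟩ := by
        intro v hv
        rcases huniv v with rfl | rfl | ⟨i, hvmem⟩
        · exact ⟨_, hv, Finset.mem_insert_self _ _, Reachable.refl _⟩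
        · exact ⟨x, hx, Finset.mem_insert_self _ _,
            (reach_step' hv (hcm _ hgy) (hzyE g)).trans (hyx g (hcm _ hgy) hgin)⟩
        · rcases hvmem with rfl | rfl | rfl
          · by_cases hBi : a i ∈ S ∧ b i ∈ S
            · exact ⟨y i, hv, Finset.mem_insert_of_mem
                (hyanchor i (hmemF i (hcm' _ hv) hBi.1 hBi.2)), Reachable.refl _⟩
            · exact ⟨x, hx, Finset.mem_insert_self _ _,
                hyx i hv (not_and_or.mp hBi)⟩
          · exact ⟨x, hx, Finset.mem_insert_self _ _, hinx i _ (Or.inl rfl) hv⟩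
          · exact ⟨x, hx, Finset.mem_insert_self _ _, hinx i _ (Or.inr rfl) hv⟩
      by_cases hFe : F = ∅
      · exfalso
        have hle := compCount_le' _ _ hcov
        have : (insert x Y).card ≤ 1 := by
          rw [hYdef, hFe]
          simp
        omega
      · have hF1 : 1 ≤ F.card := Finset.card_pos.mpr (Finset.nonempty_iff_ne_empty.mpr hFe)
        have hUsub : F.image a ∪ F.image b ⊆ S := by
          intro t ht
          rcases Finset.mem_union.mp ht with ht | ht
          · obtain ⟨i, hi, rfl⟩ := Finset.mem_image.mp ht
            exact (hFab i hi).1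
          · obtain ⟨i, hi, rfl⟩ := Finset.mem_image.mp ht
            exact (hFab i hi).2
        have hUcard : (F.image a ∪ F.image b).card = 2 * F.card := by
          rw [Finset.card_union_of_disjoint (by
            rw [Finset.disjoint_left]
            intro t hta htb
            obtain ⟨i, _, rfl⟩ := Finset.mem_image.mp hta
            obtain ⟨j, _, hji⟩ := Finset.mem_image.mp htb
            exact hab i j hji.symm)]
          rw [Finset.card_image_of_injOn (fun i _ j _ hij => by
            by_contra hne; exact haa i j hne hij)]
          rw [Finset.card_image_of_injOn (fun i _ j _ hij => by
            by_contra hne; exact hbb i j hne hij)]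
          omega
        have hle := compCount_le' _ _ hcov
        have h1 := Finset.card_insert_le x Y
        have h2 := Finset.card_le_card hUsub
        omega
    · push_neg at hgood
      have hcov : ∀ v (hv : v ∈ (↑S : Set V)ᶜ), ∃ t, ∃ ht : t ∈ (↑S : Set V)ᶜ,
          t ∈ insert x (Y ∪ (({z} : Finset V) \ S)) ∧
          (G.induce (↑S : Set V)ᶜ).Reachable ⟨v, hv⟩ ⟨t, ht⟩ := by
        intro v hv
        rcases huniv v with rfl | rfl | ⟨i, hvmem⟩
        · exact ⟨_, hv, Finset.mem_insert_self _ _, Reachable.refl _⟩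
        · refine ⟨_, hv, Finset.mem_insert_of_mem (Finset.mem_union_right _
            (Finset.mem_sdiff.mpr ⟨Finset.mem_singleton_self _, hcm' _ hv⟩)),
            Reachable.refl _⟩
        · rcases hvmem with rfl | rfl | rfl
          · have hBi := hgood i (hcm' _ hv)
            exact ⟨y i, hv, Finset.mem_insert_of_mem (Finset.mem_union_left _
              (hyanchor i (hmemF i (hcm' _ hv) hBi.1 hBi.2))), Reachable.refl _⟩
          · exact ⟨x, hx, Finset.mem_insert_self _ _, hinx i _ (Or.inl rfl) hv⟩
          · exact ⟨x, hx, Finset.mem_insert_self _ _, hinx i _ (Or.inr rfl) hv⟩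
      -- cardinality
      set U1 : Finset V := univ.image (fun i : Fin 3 => if y i ∈ S then y i else a i)
        with hU1def
      have hU1card : U1.card = 3 := by
        rw [hU1def, Finset.card_image_of_injOn, Finset.card_univ, Fintype.card_fin]
        intro i _ j _ hij
        simp only at hij
        by_contra hne
        split_ifs at hij with h1 h2 h2
        · exact hyy i j hne hij
        · exact hya i j hij
        · exact hya j i hij.symm
        · exact haa i j hne hij
      have hU2card : (F.image b).card = F.card := by
        rw [Finset.card_image_of_injOn (fun i _ j _ hij => by
          by_contra hne; exact hbb i j hne hij)]
      have hdisj : Disjoint U1 (F.image b) := by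
        rw [Finset.disjoint_left]
        intro t ht1 ht2
        obtain ⟨i, _, rfl⟩ := Finset.mem_image.mp (by rw [hU1def] at ht1; exact ht1)
        obtain ⟨j, _, hji⟩ := Finset.mem_image.mp ht2
        simp only at hji
        split_ifs at hji
        · exact hyb i j hji.symm
        · exact hab i j hji.symm
      have hUsub : U1 ∪ F.image b ⊆ S := by
        intro t ht
        rcases Finset.mem_union.mp ht with ht | ht
        · obtain ⟨i, _, rfl⟩ := Finset.mem_image.mp (by rw [hU1def] at ht; exact ht)
          show (if y i ∈ S then y i else a i) ∈ S
          split_ifs with h1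
          · exact h1
          · exact (hgood i h1).1
        · obtain ⟨j, hj, rfl⟩ := Finset.mem_image.mp ht
          exact (hFab j hj).2
      have hUcard : (U1 ∪ F.image b).card = 3 + F.card := by
        rw [Finset.card_union_of_disjoint hdisj, hU1card, hU2card]
      have hle := compCount_le' _ _ hcov
      have h1 := Finset.card_insert_le x (Y ∪ (({z} : Finset V) \ S))
      have h2 := Finset.card_union_le Y (({z} : Finset V) \ S)
      have h3 : (({z} : Finset V) \ S).card ≤ 1 := by
        calc (({z} : Finset V) \ S).card ≤ ({z} : Finset V).card :=
              Finset.card_le_card (Finset.sdiff_subset)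
          _ = 1 := Finset.card_singleton _
      have h4 := Finset.card_le_card hUsub
      omega


theorem stmt_16 [Fintype V] [DecidableEq V] (G : SimpleGraph V) [DecidableRel G.Adj]
    (h : InF2 G) :
    ConnectivityEqTwo G ∧ ToughnessEqOne G ∧
    ∀ (u : V) (c : G.Walk u u), IsLongestCycle c → ¬ IsDominating c := by
  classical
  obtain ⟨x, z, y₁, y₂, y₃, A, hInter, hUniv, hzA, hy1A, hy2A, hy3A, hy1x, hy2x, hy3x,
    hzy1, hzy2, hzy3, hy12, hEdge, hCard, hMin⟩ := h
  set y : Fin 3 → V := ![y₁, y₂, y₃] with hydef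
  have hyA : ∀ i : Fin 3, y i ∈ A i := by
    intro i; fin_cases i
    exacts [hy1A, hy2A, hy3A]
  have hyix : ∀ i : Fin 3, y i ≠ x := by
    intro i; fin_cases i
    exacts [hy1x, hy2x, hy3x]
  have hzyE : ∀ i : Fin 3, G.Adj z (y i) := by
    intro i; fin_cases i
    exacts [hzy1, hzy2, hzy3]
  have hcross : ∀ (i j : Fin 3) (v : V), i ≠ j → v ∈ A i → v ∈ A j → v = x := by
    intro i j v hij hi hj
    have hmem : v ∈ A i ∩ A j := ⟨hi, hj⟩
    rw [hInter i j hij] at hmem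
    exact hmem
  have hxA : ∀ i : Fin 3, x ∈ A i := by
    intro i
    by_cases hi : i = 0
    · subst hi
      have : x ∈ A 0 ∩ A 1 := by rw [hInter 0 1 (by decide)]; rfl
      exact this.1
    · have : x ∈ A i ∩ A 0 := by rw [hInter i 0 hi]; rfl
      exact this.1
  have hzAi : ∀ i : Fin 3, z ∉ A i := fun i hz => hzA (Set.mem_iUnion.mpr ⟨i, hz⟩)
  have huniv0 : ∀ v : V, (∃ i, v ∈ A i) ∨ v = z := by
    intro v
    have hv : v ∈ (⋃ i, A i) ∪ {z} := hUniv ▸ Set.mem_univ v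
    rcases hv with hv | hv
    · exact Or.inl (Set.mem_iUnion.mp hv)
    · exact Or.inr hv
  have hyAonly : ∀ (i j : Fin 3), i ≠ j → y i ∉ A j := by
    intro i j hij hmem
    exact hyix i (hcross i j (y i) hij (hyA i) hmem)
  have key : ∀ i : Fin 3, ∃ p q : V, p ∈ A i ∧ q ∈ A i ∧ p ≠ q ∧ p ≠ x ∧ q ≠ x ∧
      p ≠ y i ∧ q ≠ y i ∧ (∀ v ∈ A i, v = x ∨ v = y i ∨ v = p ∨ v = q) ∧
      G.Adj p x ∧ G.Adj q x ∧ G.Adj p (y i) ∧ G.Adj q (y i) ∧ G.Adj p q ∧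
      (∀ v, G.Adj p v → v = x ∨ v = y i ∨ v = q) ∧
      (∀ v, G.Adj q v → v = x ∨ v = y i ∨ v = p) := by
    intro i
    have hfin : (A i).Finite := Set.toFinite _
    have hFmem : ∀ v, v ∈ hfin.toFinset ↔ v ∈ A i := fun v => hfin.mem_toFinset
    have hFcard : hfin.toFinset.card = 4 := by
      have h1 := hCard i
      rw [Nat.card_coe_set_eq, Set.ncard_eq_toFinset_card (A i) hfin] at h1
      exact h1
    have hsub : ({x, y i} : Finset V) ⊆ hfin.toFinset := by
      intro t ht
      rcases Finset.mem_insert.mp ht with rfl | ht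
      · exact (hFmem _).mpr (hxA i)
      · rw [Finset.mem_singleton.mp ht]; exact (hFmem _).mpr (hyA i)
    have hxyicard : ({x, y i} : Finset V).card = 2 := by
      rw [Finset.card_insert_of_notMem (by simp [Ne.symm (hyix i)]), Finset.card_singleton]
    have hTcard : (hfin.toFinset \ {x, y i}).card = 2 := by
      rw [Finset.card_sdiff_of_subset hsub, hFcard, hxyicard]
    obtain ⟨p, q, hpq, hTeq⟩ := Finset.card_eq_two.mp hTcard
    have hpT : p ∈ hfin.toFinset \ {x, y i} := by rw [hTeq]; simp
    have hqT : q ∈ hfin.toFinset \ {x, y i} := by rw [hTeq]; simp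
    obtain ⟨hpF, hpx'⟩ := Finset.mem_sdiff.mp hpT
    obtain ⟨hqF, hqx'⟩ := Finset.mem_sdiff.mp hqT
    have hpx : p ≠ x := fun hh => hpx' (by simp [hh])
    have hpy : p ≠ y i := fun hh => hpx' (by simp [hh])
    have hqx : q ≠ x := fun hh => hqx' (by simp [hh])
    have hqy : q ≠ y i := fun hh => hqx' (by simp [hh])
    have hpA : p ∈ A i := (hFmem _).mp hpF
    have hqA : q ∈ A i := (hFmem _).mp hqF
    have hcover : ∀ v ∈ A i, v = x ∨ v = y i ∨ v = p ∨ v = q := by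
      intro v hv
      by_cases h1 : v = x
      · exact Or.inl h1
      by_cases h2 : v = y i
      · exact Or.inr (Or.inl h2)
      have hvT : v ∈ hfin.toFinset \ {x, y i} :=
        Finset.mem_sdiff.mpr ⟨(hFmem _).mpr hv, by simp [h1, h2]⟩
      rw [hTeq] at hvT
      rcases Finset.mem_insert.mp hvT with h | h
      · exact Or.inr (Or.inr (Or.inl h))
      · exact Or.inr (Or.inr (Or.inr (Finset.mem_singleton.mp h)))
    have inner : ∀ w w' : V, w ∈ A i → w' ∈ A i → w ≠ x → w ≠ y i → w ≠ w' →
        (∀ v ∈ A i, v = x ∨ v = y i ∨ v = w ∨ v = w') →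
        (G.Adj w x ∧ G.Adj w (y i) ∧ G.Adj w w' ∧
          (∀ v, G.Adj w v → v = x ∨ v = y i ∨ v = w')) := by
      intro w w' hwA hw'A hwx hwy hww' hcov
      have hwz : w ≠ z := fun hh => hzAi i (hh ▸ hwA)
      have hwy1 : w ≠ y₁ := by
        intro hh
        by_cases h0 : i = 0
        · exact hwy (by rw [h0]; exact hh)
        · exact hyAonly 0 i (fun hx0 => h0 hx0.symm) (show y 0 ∈ A i from (hh ▸ hwA : y₁ ∈ A i))
      have hwy2 : w ≠ y₂ := by
        intro hh
        by_cases h0 : i = 1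
        · exact hwy (by rw [h0]; exact hh)
        · exact hyAonly 1 i (fun hx0 => h0 hx0.symm) (show y 1 ∈ A i from (hh ▸ hwA : y₂ ∈ A i))
      have hwy3 : w ≠ y₃ := by
        intro hh
        by_cases h0 : i = 2
        · exact hwy (by rw [h0]; exact hh)
        · exact hyAonly 2 i (fun hx0 => h0 hx0.symm) (show y 2 ∈ A i from (hh ▸ hwA : y₃ ∈ A i))
      have hnbr : ∀ v, G.Adj w v → v ∈ A i := by
        intro v hadj
        rcases hEdge w v hadj with ⟨j, hwj, hvj⟩ | hsp
        · by_cases hji : j = i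
          · exact hji ▸ hvj
          · exact absurd (hcross j i w hji hwj hwA) hwx
        · exfalso
          simp only [Set.mem_insert_iff, Set.mem_singleton_iff, Sym2.eq_iff] at hsp
          tauto
      have hdeg : 3 ≤ G.degree w := hMin ▸ G.minDegree_le_degree w
      have hsubN : G.neighborFinset w ⊆ hfin.toFinset.erase w := by
        intro v hv
        rw [G.mem_neighborFinset] at hv
        exact Finset.mem_erase.mpr ⟨hv.ne', (hFmem _).mpr (hnbr v hv)⟩
      have hwF : w ∈ hfin.toFinset := (hFmem _).mpr hwA
      have hecard : (hfin.toFinset.erase w).card = 3 := by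
        rw [Finset.card_erase_of_mem hwF, hFcard]
      have heq : G.neighborFinset w = hfin.toFinset.erase w := by
        apply Finset.eq_of_subset_of_card_le hsubN
        rw [hecard]
        exact hdeg
      have hadjF : ∀ v, v ∈ hfin.toFinset.erase w → G.Adj w v := by
        intro v hv
        rw [← heq, G.mem_neighborFinset] at hv
        exact hv
      refine ⟨hadjF x (Finset.mem_erase.mpr ⟨Ne.symm hwx, (hFmem _).mpr (hxA i)⟩),
        hadjF (y i) (Finset.mem_erase.mpr ⟨Ne.symm hwy, (hFmem _).mpr (hyA i)⟩),
        hadjF w' (Finset.mem_erase.mpr ⟨Ne.symm hww', (hFmem _).mpr hw'A⟩), ?_⟩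
      · intro v hadj
        have hvE := hsubN ((G.mem_neighborFinset w v).mpr hadj)
        obtain ⟨hvne, hvF⟩ := Finset.mem_erase.mp hvE
        rcases hcov v ((hFmem _).mp hvF) with h | h | h | h
        · exact Or.inl h
        · exact Or.inr (Or.inl h)
        · exact absurd h hvne
        · exact Or.inr (Or.inr h)
    obtain ⟨hpxadj, hpyadj, hpqadj, hpnbr⟩ := inner p q hpA hqA hpx hpy hpq hcover
    obtain ⟨hqxadj, hqyadj, hqpadj, hqnbr⟩ := inner q p hqA hpA hqx hqy hpq.symm (by
      intro v hv; rcases hcover v hv with h | h | h | h <;> tauto)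
    exact ⟨p, q, hpA, hqA, hpq, hpx, hqx, hpy, hqy, hcover, hpxadj, hqxadj, hpyadj, hqyadj,
      hpqadj, hpnbr, hqnbr⟩
  choose p q hpA hqA hpq hpx hqx hpy hqy hcov hpxadj hqxadj hpyadj hqyadj hpqadj
    hpnbr hqnbr using key
  -- distinctness
  have hxz : x ≠ z := fun hh => hzAi 0 (hh ▸ hxA 0)
  have hxy : ∀ i, x ≠ y i := fun i => Ne.symm (hyix i)
  have hxp : ∀ i, x ≠ p i := fun i => Ne.symm (hpx i)
  have hxq : ∀ i, x ≠ q i := fun i => Ne.symm (hqx i)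
  have hzy : ∀ i, z ≠ y i := fun i hh => hzAi i (hh ▸ hyA i)
  have hzp : ∀ i, z ≠ p i := fun i hh => hzAi i (hh ▸ hpA i)
  have hzq : ∀ i, z ≠ q i := fun i hh => hzAi i (hh ▸ hqA i)
  have hyy : ∀ i j, i ≠ j → y i ≠ y j := fun i j hij hh =>
    hyix i (hcross i j (y i) hij (hyA i) (hh ▸ hyA j))
  have hyp : ∀ i j, y i ≠ p j := by
    intro i j hh
    by_cases hij : i = j
    · exact hpy j (hij ▸ hh).symm
    · exact hyix i (hcross i j (y i) hij (hyA i) (hh ▸ hpA j))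
  have hyq : ∀ i j, y i ≠ q j := by
    intro i j hh
    by_cases hij : i = j
    · exact hqy j (hij ▸ hh).symm
    · exact hyix i (hcross i j (y i) hij (hyA i) (hh ▸ hqA j))
  have hpp : ∀ i j, i ≠ j → p i ≠ p j := fun i j hij hh =>
    hpx i (hcross i j (p i) hij (hpA i) (hh ▸ hpA j))
  have hqq : ∀ i j, i ≠ j → q i ≠ q j := fun i j hij hh =>
    hqx i (hcross i j (q i) hij (hqA i) (hh ▸ hqA j))
  have hpq' : ∀ i j, p i ≠ q j := by
    intro i j hh
    by_cases hij : i = j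
    · exact hpq j (hij ▸ hh)
    · exact hpx i (hcross i j (p i) hij (hpA i) (hh ▸ hqA j))
  have huniv' : ∀ v : V, v = x ∨ v = z ∨ ∃ i, v = y i ∨ v = p i ∨ v = q i := by
    intro v
    rcases huniv0 v with ⟨i, hv⟩ | rfl
    · rcases hcov i v hv with h | h | h | h
      · exact Or.inl h
      · exact Or.inr (Or.inr ⟨i, Or.inl h⟩)
      · exact Or.inr (Or.inr ⟨i, Or.inr (Or.inl h)⟩)
      · exact Or.inr (Or.inr ⟨i, Or.inr (Or.inr h)⟩)
    · exact Or.inr (Or.inl rfl)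
  have hy01 : G.Adj (y 0) (y 1) := hy12
  -- the three parts
  obtain ⟨ha0c, hz0c, hnr, hcovw⟩ := aux_cut G x z y p q hxz hxy hxp hxq hzy hzp hzq hyy hyp hyq
    hpq' huniv' hpyadj hqyadj hpqadj hzyE (hpnbr 0) (hqnbr 0)
  have hcard2 : ({x, y 0} : Finset V).card = 2 := by
    rw [Finset.card_insert_of_notMem (by simp [hxy 0]), Finset.card_singleton]
  have hcc2 : compCount G ↑({x, y 0} : Finset V) = 2 :=
    compCount_eq_two _ _ _ ha0c hz0c hnr hcovw
  refine ⟨⟨aux_conn G x z y p q hxz hxy hxp hxq hyy hpq' huniv' hpxadj hqxadj hpyadj hqyadj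
    hzyE, ⟨{x, y 0}, hcard2, ?_⟩⟩,
    ⟨aux_tough G x z y p q hxz hxy hxp hxq hzy hzp hzq hyy hyp hyq hpp hqq hpq' huniv'
      hpxadj hqxadj hpyadj hqyadj hpqadj hzyE hy01, ⟨{x, y 0}, by omega, by omega⟩⟩, ?_⟩
  · intro hconn
    exact hnr (hconn.preconnected _ _)
  · intro u c hlc hdom
    exact aux_nodom G x y p q hyp hyq hpp hqq hpq' hyy hpqadj hpnbr hqnbr u c hlc.1 hdom

end Paper
end
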